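/- arXiv:2006.14816 — 3 statements merged into one kernel-verified Lean document; each statement's English description precedes it below -/
import Mathlib

section
/- Let F : [0, t_G) → ℝ be any function with F loc≪ G. Define H(0) arbitrarily, H(t) = F(t) − Ḡ(t−)·(dF/dG)(t) for 0 < t < t_G, H(t_G) arbitrarily in Case A, and H(t_G) = lim_{t↑t_G} F(t) in Case B. Then the pair (F, H) satisfies Condition M. Conversely, if H is any function such that the pair (F, H) satisfies Condition M, then H(t) = F(t) − Ḡ(t−)·(dF/dG)(t) for dG-almost all 0 < t < t_G and, in Case B, H(t_G) = lim_{t↑t_G} F(t). -/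
open MeasureTheory Filter Set Topology
open scoped ENNReal NNReal Classical

noncomputable section

namespace SingleJump

variable {Ω : Type*}

/-- The event `{γ > t}`. -/
def jumpSet (γ : Ω → ℝ≥0∞) (t : ℝ≥0) : Set Ω := {ω | (t : ℝ≥0∞) < γ ω}

/-- The collection `𝒻_t` of the single jump filtration generated by `γ` and the σ-field `m`:
`A ∈ 𝒻_t` iff `A` is `m`-measurable and `A ∩ {γ > t}` is either `∅` or `{γ > t}`. -/
def jumpColl (m : MeasurableSpace Ω) (γ : Ω → ℝ≥0∞) (t : ℝ≥0) : Set (Set Ω) :=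
  {A | MeasurableSet[m] A ∧ (A ∩ jumpSet γ t = ∅ ∨ A ∩ jumpSet γ t = jumpSet γ t)}

/-- `𝒻_t` as a σ-field (the collection `jumpColl` generates itself, see Proposition 1(i)). -/
def jumpσ (m : MeasurableSpace Ω) (γ : Ω → ℝ≥0∞) (t : ℝ≥0) : MeasurableSpace Ω :=
  MeasurableSpace.generateFrom (jumpColl m γ t)

/-- `𝒻_∞ = σ(⋃_{t ∈ ℝ₊} 𝒻_t)`. -/
def jumpσInf (m : MeasurableSpace Ω) (γ : Ω → ℝ≥0∞) : MeasurableSpace Ω :=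
  ⨆ t : ℝ≥0, jumpσ m γ t

/-- A real function on `ℝ≥0` is càdlàg: right-continuous everywhere, finite left limits. -/
def Cadlag (f : ℝ≥0 → ℝ) : Prop :=
  (∀ t, ContinuousWithinAt f (Ici t) t) ∧
    ∀ t : ℝ≥0, 0 < t → ∃ c : ℝ, Tendsto f (𝓝[<] t) (𝓝 c)

/-- The filter of times `t ∈ ℝ≥0` with `t ↑ a` strictly from the left (this is `atTop`
when `a = ∞`). -/
def leftF (a : ℝ≥0∞) : Filter ℝ≥0 := Filter.comap (fun t : ℝ≥0 => (t : ℝ≥0∞)) (𝓝[<] a)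

/-- Total variation of `f` over `[0,∞)`, including `|f 0|` (the paper's convention `Var`). -/
def totalVar (f : ℝ≥0 → ℝ) : ℝ≥0∞ := (‖f 0‖₊ : ℝ≥0∞) + eVariationOn f Set.univ

/-- The process `M` stopped at the (possibly infinite) random time `T`. -/
def stopped (M : ℝ≥0 → Ω → ℝ) (T : Ω → ℝ≥0∞) : ℝ≥0 → Ω → ℝ :=
  fun t ω => M (((t : ℝ≥0∞) ⊓ T ω).toNNReal) ω

section WithMeasurableSpace

variable [m : MeasurableSpace Ω]

/-- `Ḡ(t) = 1 - G(t) = P(γ > t)`. -/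
def Gbar (μ : Measure Ω) (γ : Ω → ℝ≥0∞) (t : ℝ≥0) : ℝ :=
  (μ {ω | (t : ℝ≥0∞) < γ ω}).toReal

/-- `Ḡ(t-) = P(γ ≥ t)`, the left-hand limit of `Ḡ` at `t`. -/
def GbarLeft (μ : Measure Ω) (γ : Ω → ℝ≥0∞) (t : ℝ≥0) : ℝ :=
  (μ {ω | (t : ℝ≥0∞) ≤ γ ω}).toReal

/-- `t_G = sup {t ∈ ℝ₊ : G(t) < 1}`, the right endpoint of the law of `γ`. -/
def tG (μ : Measure Ω) (γ : Ω → ℝ≥0∞) : ℝ≥0∞ :=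
  sSup ((fun t : ℝ≥0 => (t : ℝ≥0∞)) '' {t : ℝ≥0 | μ {ω | γ ω ≤ (t : ℝ≥0∞)} < 1})

/-- `𝒯 = {t ∈ ℝ₊ : P(γ ≥ t) > 0}`. -/
def TT (μ : Measure Ω) (γ : Ω → ℝ≥0∞) : Set ℝ≥0 :=
  {t | 0 < μ {ω | (t : ℝ≥0∞) ≤ γ ω}}

/-- Case A: `P(γ = t_G < ∞) = 0`. -/
def CaseA (μ : Measure Ω) (γ : Ω → ℝ≥0∞) : Prop :=
  μ {ω | γ ω = tG μ γ ∧ tG μ γ < ⊤} = 0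

/-- Case B: `P(γ = t_G < ∞) > 0`. -/
def CaseB (μ : Measure Ω) (γ : Ω → ℝ≥0∞) : Prop :=
  0 < μ {ω | γ ω = tG μ γ ∧ tG μ γ < ⊤}

/-- `z ∈ L¹_loc(dG)` : `z` is Borel and `∫_{[0,t]} |z(s)| dG(s) < ∞` for every `t ∈ 𝒯`,
where `dG` is the law of `γ` (a measure on `[0,∞]`). -/
def MemL1loc (μ : Measure Ω) (γ : Ω → ℝ≥0∞) (z : ℝ≥0 → ℝ) : Prop :=
  Measurable z ∧ ∀ t ∈ TT μ γ,
    IntegrableOn (fun x : ℝ≥0∞ => z x.toNNReal) (Icc 0 (t : ℝ≥0∞)) (μ.map γ)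

/-- `F loc≪ G` with density `z = dF/dG` : `F(t) = F(0) + ∫_(0,t] z(s) dG(s)` for `t < t_G`. -/
def LocAC (μ : Measure Ω) (γ : Ω → ℝ≥0∞) (F z : ℝ≥0 → ℝ) : Prop :=
  MemL1loc μ γ z ∧ ∀ t : ℝ≥0, (t : ℝ≥0∞) < tG μ γ →
    F t = F 0 + ∫ x in Ioc (0 : ℝ≥0∞) (t : ℝ≥0∞), z x.toNNReal ∂(μ.map γ)

/-- Condition M for the pair `(F, H)`. -/
def CondM (μ : Measure Ω) (γ : Ω → ℝ≥0∞) (F H : ℝ≥0 → ℝ) : Prop :=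
  (∃ z, LocAC μ γ F z) ∧ MemL1loc μ γ H ∧
  (∀ t : ℝ≥0, (t : ℝ≥0∞) < tG μ γ →
    F t * Gbar μ γ t + ∫ x in Ioc (0 : ℝ≥0∞) (t : ℝ≥0∞), H x.toNNReal ∂(μ.map γ)
      = F 0 * Gbar μ γ 0) ∧
  (CaseB μ γ → Tendsto F (leftF (tG μ γ)) (𝓝 (H (tG μ γ).toNNReal)))

/-- A stopping time of the single jump filtration: `{T ≤ t} ∈ 𝒻_t` for all `t ∈ ℝ₊`. -/
def IsSJStoppingTime (γ : Ω → ℝ≥0∞) (T : Ω → ℝ≥0∞) : Prop :=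
  ∀ t : ℝ≥0, {ω | T ω ≤ (t : ℝ≥0∞)} ∈ jumpColl m γ t

/-- The martingale property on a set `S` of times, w.r.t. the single jump filtration. -/
def MartingaleOn (μ : Measure Ω) (γ : Ω → ℝ≥0∞) (M : ℝ≥0 → Ω → ℝ) (S : Set ℝ≥0) : Prop :=
  (∀ t ∈ S, Measurable[jumpσ m γ t] (M t)) ∧ (∀ t ∈ S, Integrable (M t) μ) ∧
    ∀ s ∈ S, ∀ t ∈ S, s ≤ t → μ[M t|jumpσ m γ s] =ᵐ[μ] M s

/-- A uniformly integrable martingale w.r.t. the single jump filtration. -/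
def UIMartingale (μ : Measure Ω) (γ : Ω → ℝ≥0∞) (M : ℝ≥0 → Ω → ℝ) : Prop :=
  MartingaleOn μ γ M Set.univ ∧ UniformIntegrable M 1 μ

/-- A local martingale w.r.t. the single jump filtration: adapted, a.s. càdlàg paths, and
there are stopping times `T n ↑ ∞` a.s. with each stopped process a UI martingale. -/
def LocalMartingale (μ : Measure Ω) (γ : Ω → ℝ≥0∞) (M : ℝ≥0 → Ω → ℝ) : Prop :=
  (∀ t : ℝ≥0, Measurable[jumpσ m γ t] (M t)) ∧
  (∀ᵐ ω ∂μ, Cadlag fun t => M t ω) ∧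
  ∃ T : ℕ → Ω → ℝ≥0∞,
    (∀ n, IsSJStoppingTime γ (T n)) ∧
    (∀ᵐ ω ∂μ, Monotone (fun n => T n ω) ∧ Tendsto (fun n => T n ω) atTop (𝓝 (⊤ : ℝ≥0∞))) ∧
    ∀ n, UIMartingale μ γ (stopped M (T n))

/-- `E[L' | γ] = 0` for a (possibly only locally integrable) random variable `L'`. -/
def CondZeroGivenGamma (μ : Measure Ω) (γ : Ω → ℝ≥0∞) (L' : Ω → ℝ) : Prop :=
  ∀ B : Set ℝ≥0∞, MeasurableSet B → IntegrableOn L' (γ ⁻¹' B) μ →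
    ∫ ω in γ ⁻¹' B, L' ω ∂μ = 0


/-- Auxiliary: measurability and uniform bound for `x ↦ ∫_(0, x ⊓ T] ζ dν`. -/
lemma aux_Phi (ν : Measure ℝ≥0∞) [IsFiniteMeasure ν] {ζ : ℝ≥0∞ → ℝ} (hζm : Measurable ζ)
    {T : ℝ≥0∞} (hζi : IntegrableOn ζ (Ioc 0 T) ν) :
    Measurable (fun x => ∫ u in Ioc 0 (x ⊓ T), ζ u ∂ν) ∧
      ∀ x, |∫ u in Ioc 0 (x ⊓ T), ζ u ∂ν| ≤ ∫ u in Ioc 0 T, |ζ u| ∂ν := by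
  have habs : ∀ u : ℝ≥0∞, ζ u = max (ζ u) 0 - max (-ζ u) 0 := by
    intro u; simp only [max_def]; split_ifs <;> linarith
  have hpos : IntegrableOn (fun u => max (ζ u) 0) (Ioc 0 T) ν := by
    exact hζi.pos_part
  have hneg : IntegrableOn (fun u => max (-ζ u) 0) (Ioc 0 T) ν := by
    exact hζi.neg.pos_part
  have hsubset : ∀ x : ℝ≥0∞, Ioc 0 (x ⊓ T) ⊆ Ioc 0 T :=
    fun x => Ioc_subset_Ioc_right inf_le_right
  have hmono : ∀ x y : ℝ≥0∞, x ≤ y → Ioc 0 (x ⊓ T) ⊆ Ioc 0 (y ⊓ T) :=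
    fun x y hxy => Ioc_subset_Ioc_right (inf_le_inf_right _ hxy)
  have hsplit : ∀ x : ℝ≥0∞, (∫ u in Ioc 0 (x ⊓ T), ζ u ∂ν)
      = (∫ u in Ioc 0 (x ⊓ T), max (ζ u) 0 ∂ν) - ∫ u in Ioc 0 (x ⊓ T), max (-ζ u) 0 ∂ν := by
    intro x
    rw [← integral_sub (hpos.mono_set (hsubset x)) (hneg.mono_set (hsubset x))]
    exact setIntegral_congr_fun measurableSet_Ioc fun u _ => habs u
  have hg1 : Measurable (fun x => ∫ u in Ioc 0 (x ⊓ T), max (ζ u) 0 ∂ν) := by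
    refine Monotone.measurable (fun x y hxy => ?_)
    exact setIntegral_mono_set (hpos.mono_set (hsubset y)) (Filter.Eventually.of_forall fun u => le_max_right _ _)
      (HasSubset.Subset.eventuallyLE (hmono x y hxy))
  have hg2 : Measurable (fun x => ∫ u in Ioc 0 (x ⊓ T), max (-ζ u) 0 ∂ν) := by
    refine Monotone.measurable (fun x y hxy => ?_)
    exact setIntegral_mono_set (hneg.mono_set (hsubset y)) (Filter.Eventually.of_forall fun u => le_max_right _ _)
      (HasSubset.Subset.eventuallyLE (hmono x y hxy))
  constructor
  · have : (fun x => ∫ u in Ioc 0 (x ⊓ T), ζ u ∂ν)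
        = fun x => (∫ u in Ioc 0 (x ⊓ T), max (ζ u) 0 ∂ν)
          - ∫ u in Ioc 0 (x ⊓ T), max (-ζ u) 0 ∂ν := funext hsplit
    rw [this]; exact hg1.sub hg2
  · intro x
    have h1 : |∫ u in Ioc 0 (x ⊓ T), ζ u ∂ν| ≤ ∫ u in Ioc 0 (x ⊓ T), |ζ u| ∂ν := by
      simpa [Real.norm_eq_abs] using norm_integral_le_integral_norm
        (μ := ν.restrict (Ioc 0 (x ⊓ T))) ζ
    refine h1.trans ?_
    exact setIntegral_mono_set hζi.abs
      (Filter.Eventually.of_forall fun u => abs_nonneg _)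
      (HasSubset.Subset.eventuallyLE (hsubset x))

/-- **Proposition 3 (b).** Given `F loc≪ G` with density `z = dF/dG`, any `H` with
`H(t) = F(t) − Ḡ(t−) z(t)` for `0 < t < t_G` (with `H(0)` arbitrary, `H(t_G)` arbitrary in
Case A and `H(t_G) = lim_{t↑t_G} F(t)` in Case B) makes `(F,H)` satisfy Condition M; and
conversely, if `(F,H)` satisfies Condition M then `H(t) = F(t) − Ḡ(t−) z(t)` for `dG`-a.e.
`0 < t < t_G` and, in Case B, `H(t_G) = lim_{t↑t_G} F(t)`. -/
theorem stmt_8 (μ : Measure Ω) [IsProbabilityMeasure μ] (γ : Ω → ℝ≥0∞)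
    (hγ : Measurable γ) (hpos : 0 < μ {ω | 0 < γ ω})
    (F z : ℝ≥0 → ℝ) (hz : LocAC μ γ F z) :
    (∀ H : ℝ≥0 → ℝ, Measurable H →
      (∀ t : ℝ≥0, 0 < t → (t : ℝ≥0∞) < tG μ γ →
        H t = F t - GbarLeft μ γ t * z t) →
      (CaseB μ γ → Tendsto F (leftF (tG μ γ)) (𝓝 (H (tG μ γ).toNNReal))) →
      CondM μ γ F H) ∧
    (∀ H : ℝ≥0 → ℝ, CondM μ γ F H →
      (∀ᵐ x ∂((μ.map γ).restrict (Ioo 0 (tG μ γ))),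
        H x.toNNReal = F x.toNNReal - GbarLeft μ γ x.toNNReal * z x.toNNReal) ∧
      (CaseB μ γ → Tendsto F (leftF (tG μ γ)) (𝓝 (H (tG μ γ).toNNReal)))) := by
  classical
  have hzmeas : Measurable z := hz.1.1
  haveI hPν : IsProbabilityMeasure (μ.map γ) := Measure.isProbabilityMeasure_map hγ.aemeasurable
  have hζmeas : Measurable fun x : ℝ≥0∞ => z x.toNNReal :=
    hzmeas.comp ENNReal.measurable_toNNReal
  have hmapIoi : ∀ s : ℝ≥0∞, (μ.map γ) (Ioi s) = μ {ω | s < γ ω} := fun s => by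
    rw [Measure.map_apply hγ measurableSet_Ioi]; rfl
  have hmapIci : ∀ s : ℝ≥0∞, (μ.map γ) (Ici s) = μ {ω | s ≤ γ ω} := fun s => by
    rw [Measure.map_apply hγ measurableSet_Ici]; rfl
  have hGbar : ∀ t : ℝ≥0, Gbar μ γ t = ((μ.map γ) (Ioi (t : ℝ≥0∞))).toReal := fun t =>
    congrArg ENNReal.toReal (hmapIoi _).symm
  have hGbarL : ∀ t : ℝ≥0, GbarLeft μ γ t = ((μ.map γ) (Ici (t : ℝ≥0∞))).toReal := fun t =>
    congrArg ENNReal.toReal (hmapIci _).symm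
  -- `Ḡ` vanishes beyond `t_G`
  have hnullBar : ∀ s : ℝ≥0, tG μ γ < (s : ℝ≥0∞) → μ {ω | (s : ℝ≥0∞) < γ ω} = 0 := by
    intro s hs
    by_contra h0
    have h1 : μ {ω | γ ω ≤ (s : ℝ≥0∞)} < 1 := by
      have hc : {ω | γ ω ≤ (s : ℝ≥0∞)} = {ω | (s : ℝ≥0∞) < γ ω}ᶜ := by
        ext ω; simp [not_lt]
      rw [hc, show μ {ω | (s : ℝ≥0∞) < γ ω}ᶜ = 1 - μ {ω | (s : ℝ≥0∞) < γ ω} from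
        prob_compl_eq_one_sub (hγ measurableSet_Ioi)]
      exact ENNReal.sub_lt_self ENNReal.one_ne_top one_ne_zero h0
    have hmem : (s : ℝ≥0∞) ∈ (fun t : ℝ≥0 => (t : ℝ≥0∞)) ''
        {t : ℝ≥0 | μ {ω | γ ω ≤ (t : ℝ≥0∞)} < 1} := ⟨s, h1, rfl⟩
    have hle : (s : ℝ≥0∞) ≤ tG μ γ := le_sSup hmem
    exact absurd hle (not_le.mpr hs)
  have hGpos : ∀ t : ℝ≥0, (t : ℝ≥0∞) < tG μ γ → 0 < μ {ω | (t : ℝ≥0∞) < γ ω} := by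
    intro t ht
    obtain ⟨b, hb, htb⟩ := lt_sSup_iff.mp ht
    obtain ⟨s, hs, rfl⟩ := hb
    simp only [mem_setOf_eq] at hs
    have h2 : μ {ω | (s : ℝ≥0∞) < γ ω} ≠ 0 := by
      intro h0
      have hc : {ω | γ ω ≤ (s : ℝ≥0∞)} = {ω | (s : ℝ≥0∞) < γ ω}ᶜ := by
        ext ω; simp [not_lt]
      rw [hc, show μ {ω | (s : ℝ≥0∞) < γ ω}ᶜ = 1 - μ {ω | (s : ℝ≥0∞) < γ ω} from
        prob_compl_eq_one_sub (hγ measurableSet_Ioi), h0, tsub_zero] at hs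
      exact lt_irrefl _ hs
    exact (pos_iff_ne_zero.mpr h2).trans_le (measure_mono fun ω hω => htb.trans hω)
  have hmemTT : ∀ t : ℝ≥0, (t : ℝ≥0∞) < tG μ γ → t ∈ TT μ γ := fun t ht =>
    (hGpos t ht).trans_le (measure_mono fun ω hω =>
      le_of_lt (show (t : ℝ≥0∞) < γ ω from hω))
  have hTTle : ∀ t : ℝ≥0, t ∈ TT μ γ → (t : ℝ≥0∞) ≤ tG μ γ := by
    intro t ht
    by_contra h
    push_neg at h
    obtain ⟨r, hr1, hr2⟩ := ENNReal.lt_iff_exists_nnreal_btwn.mp h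
    have h0 : μ {ω | (t : ℝ≥0∞) ≤ γ ω} = 0 :=
      measure_mono_null (fun ω hω =>
        lt_of_lt_of_le hr2 (show (t : ℝ≥0∞) ≤ γ ω from hω)) (hnullBar r hr1)
    exact absurd h0 (ne_of_gt ht)
  -- `GbarLeft ∘ toNNReal` is measurable, with values in `[0,1]`
  have hGLmeas : Measurable fun x : ℝ≥0∞ => GbarLeft μ γ x.toNNReal := by
    have h1 : Antitone fun y : ℝ≥0∞ => (μ {ω | y ≤ γ ω}).toReal := fun y1 y2 h12 =>
      ENNReal.toReal_mono (measure_ne_top _ _) (measure_mono fun ω hω =>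
        h12.trans (show y2 ≤ γ ω from hω))
    exact h1.measurable.comp (measurable_coe_nnreal_ennreal.comp ENNReal.measurable_toNNReal)
  have hGL01 : ∀ x : ℝ≥0∞, 0 ≤ GbarLeft μ γ x.toNNReal ∧ GbarLeft μ γ x.toNNReal ≤ 1 := by
    intro x
    refine ⟨ENNReal.toReal_nonneg, ?_⟩
    have h := ENNReal.toReal_mono ENNReal.one_ne_top
      (prob_le_one (μ := μ) (s := {ω | ((x.toNNReal : ℝ≥0) : ℝ≥0∞) ≤ γ ω}))
    simpa [GbarLeft] using h
  -- integrability of `F ∘ toNNReal`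
  have hF_main : ∀ t : ℝ≥0, t ∈ TT μ γ →
      IntegrableOn (fun x : ℝ≥0∞ => F x.toNNReal)
        (Ioc 0 (t : ℝ≥0∞) ∩ Iio (tG μ γ)) (μ.map γ) := by
    intro t ht
    have hζIcc : IntegrableOn (fun x : ℝ≥0∞ => z x.toNNReal) (Icc 0 (t : ℝ≥0∞)) (μ.map γ) :=
      hz.1.2 t ht
    have hζIoc : IntegrableOn (fun x : ℝ≥0∞ => z x.toNNReal) (Ioc 0 (t : ℝ≥0∞)) (μ.map γ) :=
      hζIcc.mono_set Ioc_subset_Icc_self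
    obtain ⟨hΦmeas, hΦbd⟩ := aux_Phi (μ.map γ) hζmeas hζIoc
    have hmeasS : MeasurableSet (Ioc (0 : ℝ≥0∞) (t : ℝ≥0∞) ∩ Iio (tG μ γ)) :=
      measurableSet_Ioc.inter measurableSet_Iio
    have hFeq : ∀ x ∈ Ioc (0 : ℝ≥0∞) (t : ℝ≥0∞) ∩ Iio (tG μ γ),
        F x.toNNReal = F 0 + ∫ u in Ioc 0 (x ⊓ (t : ℝ≥0∞)), z u.toNNReal ∂(μ.map γ) := by
      intro x hx
      obtain ⟨⟨hx0, hxt⟩, hxG⟩ := hx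
      have hxtop : x ≠ ⊤ := (hxt.trans_lt ENNReal.coe_lt_top).ne
      have hcoe : ((x.toNNReal : ℝ≥0) : ℝ≥0∞) = x := ENNReal.coe_toNNReal hxtop
      have hlt : ((x.toNNReal : ℝ≥0) : ℝ≥0∞) < tG μ γ := by rw [hcoe]; exact hxG
      rw [hz.2 x.toNNReal hlt, hcoe, inf_eq_left.mpr hxt]
    have haesm : AEStronglyMeasurable (fun x : ℝ≥0∞ => F x.toNNReal)
        ((μ.map γ).restrict (Ioc 0 (t : ℝ≥0∞) ∩ Iio (tG μ γ))) := by
      refine AEStronglyMeasurable.congr (f := fun x : ℝ≥0∞ =>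
        F 0 + ∫ u in Ioc 0 (x ⊓ (t : ℝ≥0∞)), z u.toNNReal ∂(μ.map γ))
        ((measurable_const.add hΦmeas).aestronglyMeasurable) ?_
      rw [Filter.EventuallyEq, ae_restrict_iff' hmeasS]
      exact ae_of_all _ fun x hx => (hFeq x hx).symm
    refine Integrable.mono'
      (integrable_const (|F 0| + ∫ u in Ioc 0 (t : ℝ≥0∞), |z u.toNNReal| ∂(μ.map γ)))
      haesm ?_
    rw [ae_restrict_iff' hmeasS]
    refine ae_of_all _ fun x hx => ?_
    rw [hFeq x hx, Real.norm_eq_abs]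
    exact (abs_add_le _ _).trans (add_le_add le_rfl (hΦbd x))
  -- integrability of the product `GbarLeft ⋅ z`
  have hGLζ : ∀ t : ℝ≥0, t ∈ TT μ γ →
      IntegrableOn (fun x : ℝ≥0∞ => GbarLeft μ γ x.toNNReal * z x.toNNReal)
        (Icc 0 (t : ℝ≥0∞)) (μ.map γ) := by
    intro t ht
    have hζIcc : IntegrableOn (fun x : ℝ≥0∞ => z x.toNNReal) (Icc 0 (t : ℝ≥0∞)) (μ.map γ) :=
      hz.1.2 t ht
    refine Integrable.mono' hζIcc.abs ((hGLmeas.mul hζmeas).aestronglyMeasurable)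
      (ae_of_all _ fun x => ?_)
    rw [Real.norm_eq_abs, abs_mul]
    calc |GbarLeft μ γ x.toNNReal| * |z x.toNNReal| ≤ 1 * |z x.toNNReal| := by
          refine mul_le_mul_of_nonneg_right ?_ (abs_nonneg _)
          rw [abs_of_nonneg (hGL01 x).1]; exact (hGL01 x).2
      _ = |z x.toNNReal| := one_mul _
  have hV_int : ∀ t : ℝ≥0, t ∈ TT μ γ →
      IntegrableOn (fun x : ℝ≥0∞ => F x.toNNReal - GbarLeft μ γ x.toNNReal * z x.toNNReal)
        (Ioc 0 (t : ℝ≥0∞) ∩ Iio (tG μ γ)) (μ.map γ) := fun t ht =>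
    (hF_main t ht).sub ((hGLζ t ht).mono_set fun x hx => ⟨zero_le, (mem_Ioc.mp hx.1).2⟩)
  -- the key integral computation
  have hkeyC : ∀ t : ℝ≥0, (t : ℝ≥0∞) < tG μ γ →
      ∫ x in Ioc (0 : ℝ≥0∞) (t : ℝ≥0∞),
          (F x.toNNReal - GbarLeft μ γ x.toNNReal * z x.toNNReal) ∂(μ.map γ)
        = F 0 * Gbar μ γ 0 - F t * Gbar μ γ t := by
    intro t htG
    have ht : t ∈ TT μ γ := hmemTT t htG
    have hζIcc : IntegrableOn (fun x : ℝ≥0∞ => z x.toNNReal) (Icc 0 (t : ℝ≥0∞)) (μ.map γ) :=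
      hz.1.2 t ht
    have hζIoc : IntegrableOn (fun x : ℝ≥0∞ => z x.toNNReal) (Ioc 0 (t : ℝ≥0∞)) (μ.map γ) :=
      hζIcc.mono_set Ioc_subset_Icc_self
    have hSsub : Ioc (0 : ℝ≥0∞) (t : ℝ≥0∞) ⊆ Ioc 0 (t : ℝ≥0∞) ∩ Iio (tG μ γ) :=
      fun x hx => ⟨hx, lt_of_le_of_lt (mem_Ioc.mp hx).2 htG⟩
    have hFS : IntegrableOn (fun x : ℝ≥0∞ => F x.toNNReal) (Ioc 0 (t : ℝ≥0∞)) (μ.map γ) :=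
      (hF_main t ht).mono_set hSsub
    have hGLζS : IntegrableOn (fun x : ℝ≥0∞ => GbarLeft μ γ x.toNNReal * z x.toNNReal)
        (Ioc 0 (t : ℝ≥0∞)) (μ.map γ) := (hGLζ t ht).mono_set Ioc_subset_Icc_self
    obtain ⟨hΦmeas, hΦbd⟩ := aux_Phi (μ.map γ) hζmeas hζIoc
    have hΦint : Integrable
        (fun x : ℝ≥0∞ => ∫ u in Ioc 0 (x ⊓ (t : ℝ≥0∞)), z u.toNNReal ∂(μ.map γ)) (μ.map γ) := by
      refine Integrable.mono'
        (integrable_const (∫ u in Ioc 0 (t : ℝ≥0∞), |z u.toNNReal| ∂(μ.map γ)))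
        hΦmeas.aestronglyMeasurable (ae_of_all _ fun x => ?_)
      rw [Real.norm_eq_abs]; exact hΦbd x
    have hSmeas : MeasurableSet (Ioc (0 : ℝ≥0∞) (t : ℝ≥0∞)) := measurableSet_Ioc
    -- step 1 : expand `F`
    have hstep1 : ∫ x in Ioc (0 : ℝ≥0∞) (t : ℝ≥0∞), F x.toNNReal ∂(μ.map γ)
        = F 0 * ((μ.map γ) (Ioc (0 : ℝ≥0∞) (t : ℝ≥0∞))).toReal
          + ∫ x in Ioc (0 : ℝ≥0∞) (t : ℝ≥0∞),
              (∫ u in Ioc 0 (x ⊓ (t : ℝ≥0∞)), z u.toNNReal ∂(μ.map γ)) ∂(μ.map γ) := by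
      rw [setIntegral_congr_fun hSmeas (g := fun x : ℝ≥0∞ =>
          F 0 + ∫ u in Ioc 0 (x ⊓ (t : ℝ≥0∞)), z u.toNNReal ∂(μ.map γ)) ?_]
      · rw [integral_add (integrableOn_const (C := F 0) (measure_ne_top _ _))
          hΦint.integrableOn, setIntegral_const, smul_eq_mul, mul_comm]; rfl
      · intro x hx
        obtain ⟨hx1, hx2⟩ := hx
        have hxtop : x ≠ ⊤ := (hx2.trans_lt ENNReal.coe_lt_top).ne
        have hcoe : ((x.toNNReal : ℝ≥0) : ℝ≥0∞) = x := ENNReal.coe_toNNReal hxtop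
        have hlt : ((x.toNNReal : ℝ≥0) : ℝ≥0∞) < tG μ γ := by
          rw [hcoe]; exact lt_of_le_of_lt hx2 htG
        show F x.toNNReal = F 0 + ∫ u in Ioc 0 (x ⊓ (t : ℝ≥0∞)), z u.toNNReal ∂(μ.map γ)
        rw [hz.2 x.toNNReal hlt, hcoe, inf_eq_left.mpr hx2]
    -- step 2 : Fubini
    have hprod : Integrable (Function.uncurry fun s u : ℝ≥0∞ =>
        if u ≤ s then z u.toNNReal else 0)
        (((μ.map γ).restrict (Ioc 0 (t : ℝ≥0∞))).prod
          ((μ.map γ).restrict (Ioc 0 (t : ℝ≥0∞)))) := by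
      have h1 : Integrable (fun p : ℝ≥0∞ × ℝ≥0∞ => z p.2.toNNReal)
          (((μ.map γ).restrict (Ioc 0 (t : ℝ≥0∞))).prod
            ((μ.map γ).restrict (Ioc 0 (t : ℝ≥0∞)))) := by
        have h2 : Integrable (fun u : ℝ≥0∞ => z u.toNNReal)
            ((((μ.map γ).restrict (Ioc 0 (t : ℝ≥0∞))) univ) •
              ((μ.map γ).restrict (Ioc 0 (t : ℝ≥0∞)))) :=
          hζIoc.smul_measure (measure_ne_top _ _)
        have h3 := (integrable_map_measure hζmeas.aestronglyMeasurable
          measurable_snd.aemeasurable (f := Prod.snd)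
          (μ := (((μ.map γ).restrict (Ioc 0 (t : ℝ≥0∞))).prod
            ((μ.map γ).restrict (Ioc 0 (t : ℝ≥0∞)))))).mp
        rw [Measure.map_snd_prod] at h3
        exact h3 h2
      have hsetm : MeasurableSet {p : ℝ≥0∞ × ℝ≥0∞ | p.2 ≤ p.1} :=
        measurableSet_le measurable_snd measurable_fst
      have h5 := h1.indicator hsetm
      have h6 : (Function.uncurry fun s u : ℝ≥0∞ => if u ≤ s then z u.toNNReal else 0)
          = ({p : ℝ≥0∞ × ℝ≥0∞ | p.2 ≤ p.1}).indicator fun p => z p.2.toNNReal := by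
        funext p
        by_cases h : p.2 ≤ p.1 <;> simp [Function.uncurry, indicator, h]
      rw [h6]; exact h5
    have hswap := integral_integral_swap
      (f := fun s u : ℝ≥0∞ => if u ≤ s then z u.toNNReal else 0) hprod
    have hstep2 : ∫ x in Ioc (0 : ℝ≥0∞) (t : ℝ≥0∞),
          (∫ u in Ioc 0 (x ⊓ (t : ℝ≥0∞)), z u.toNNReal ∂(μ.map γ)) ∂(μ.map γ)
        = ∫ u in Ioc (0 : ℝ≥0∞) (t : ℝ≥0∞),
            (z u.toNNReal * ((μ.map γ) (Icc u (t : ℝ≥0∞))).toReal) ∂(μ.map γ) := by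
      have hL : ∫ x in Ioc (0 : ℝ≥0∞) (t : ℝ≥0∞),
            (∫ u in Ioc 0 (x ⊓ (t : ℝ≥0∞)), z u.toNNReal ∂(μ.map γ)) ∂(μ.map γ)
          = ∫ s in Ioc (0 : ℝ≥0∞) (t : ℝ≥0∞), (∫ u in Ioc (0 : ℝ≥0∞) (t : ℝ≥0∞),
              (if u ≤ s then z u.toNNReal else 0) ∂(μ.map γ)) ∂(μ.map γ) := by
        refine setIntegral_congr_fun hSmeas fun s hs => ?_
        obtain ⟨hs1, hs2⟩ := hs
        show (∫ u in Ioc 0 (s ⊓ (t : ℝ≥0∞)), z u.toNNReal ∂(μ.map γ))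
          = ∫ u in Ioc (0 : ℝ≥0∞) (t : ℝ≥0∞),
              (if u ≤ s then z u.toNNReal else 0) ∂(μ.map γ)
        rw [inf_eq_left.mpr hs2]
        have h6 : ∫ u in Ioc (0 : ℝ≥0∞) (t : ℝ≥0∞),
              (if u ≤ s then z u.toNNReal else 0) ∂(μ.map γ)
            = ∫ u in Ioc (0 : ℝ≥0∞) (t : ℝ≥0∞),
              (Iic s).indicator (fun u => z u.toNNReal) u ∂(μ.map γ) := by
          refine setIntegral_congr_fun hSmeas fun u _ => ?_
          show (if u ≤ s then z u.toNNReal else 0) = (Iic s).indicator (fun u => z u.toNNReal) u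
          by_cases h : u ≤ s <;> simp [indicator, h]
        rw [h6, setIntegral_indicator measurableSet_Iic]
        have h7 : Ioc (0 : ℝ≥0∞) (t : ℝ≥0∞) ∩ Iic s = Ioc 0 s := by
          ext x
          simp only [mem_inter_iff, mem_Ioc, mem_Iic]
          exact ⟨fun h => ⟨h.1.1, h.2⟩, fun h => ⟨⟨h.1, h.2.trans hs2⟩, h.2⟩⟩
        rw [h7]
      rw [hL, hswap]
      refine setIntegral_congr_fun hSmeas fun u hu => ?_
      obtain ⟨hu1, hu2⟩ := hu
      show (∫ s in Ioc (0 : ℝ≥0∞) (t : ℝ≥0∞),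
          (if u ≤ s then z u.toNNReal else 0) ∂(μ.map γ))
        = z u.toNNReal * ((μ.map γ) (Icc u (t : ℝ≥0∞))).toReal
      have h8 : ∫ s in Ioc (0 : ℝ≥0∞) (t : ℝ≥0∞),
            (if u ≤ s then z u.toNNReal else 0) ∂(μ.map γ)
          = ∫ s in Ioc (0 : ℝ≥0∞) (t : ℝ≥0∞),
            (Ici u).indicator (fun _ => z u.toNNReal) s ∂(μ.map γ) := by
        refine setIntegral_congr_fun hSmeas fun s _ => ?_
        show (if u ≤ s then z u.toNNReal else 0) = (Ici u).indicator (fun _ => z u.toNNReal) s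
        by_cases h : u ≤ s <;> simp [indicator, h]
      rw [h8, setIntegral_indicator measurableSet_Ici, setIntegral_const, smul_eq_mul, mul_comm]
      have h9 : Ioc (0 : ℝ≥0∞) (t : ℝ≥0∞) ∩ Ici u = Icc u (t : ℝ≥0∞) := by
        ext x
        simp only [mem_inter_iff, mem_Ioc, mem_Ici, mem_Icc]
        exact ⟨fun h => ⟨h.2, h.1.2⟩, fun h => ⟨⟨lt_of_lt_of_le hu1 h.1, h.2⟩, h.1⟩⟩
      rw [h9]; rfl
    -- integrability of the `Icc`-weighted integrand
    have hIccmeas : Measurable fun u : ℝ≥0∞ => ((μ.map γ) (Icc u (t : ℝ≥0∞))).toReal := by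
      refine Antitone.measurable fun u1 u2 h12 => ?_
      exact ENNReal.toReal_mono (measure_ne_top _ _) (measure_mono (Icc_subset_Icc_left h12))
    have hIccint : IntegrableOn
        (fun u : ℝ≥0∞ => z u.toNNReal * ((μ.map γ) (Icc u (t : ℝ≥0∞))).toReal)
        (Ioc 0 (t : ℝ≥0∞)) (μ.map γ) := by
      refine Integrable.mono' hζIoc.abs ((hζmeas.mul hIccmeas).aestronglyMeasurable)
        (ae_of_all _ fun u => ?_)
      rw [Real.norm_eq_abs, abs_mul]
      have h10 : |((μ.map γ) (Icc u (t : ℝ≥0∞))).toReal| ≤ 1 := by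
        rw [abs_of_nonneg ENNReal.toReal_nonneg]
        simpa using ENNReal.toReal_mono ENNReal.one_ne_top
          (prob_le_one (μ := μ.map γ) (s := Icc u (t : ℝ≥0∞)))
      calc |z u.toNNReal| * |((μ.map γ) (Icc u (t : ℝ≥0∞))).toReal| ≤ |z u.toNNReal| * 1 :=
            mul_le_mul_of_nonneg_left h10 (abs_nonneg _)
        _ = |z u.toNNReal| := mul_one _
    -- step 3 : collapse the weight
    have hstep3 : ∫ u in Ioc (0 : ℝ≥0∞) (t : ℝ≥0∞),
          (z u.toNNReal * ((μ.map γ) (Icc u (t : ℝ≥0∞))).toReal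
            - GbarLeft μ γ u.toNNReal * z u.toNNReal) ∂(μ.map γ)
        = (-((μ.map γ) (Ioi (t : ℝ≥0∞))).toReal)
            * ∫ u in Ioc (0 : ℝ≥0∞) (t : ℝ≥0∞), z u.toNNReal ∂(μ.map γ) := by
      have h11 : ∀ u ∈ Ioc (0 : ℝ≥0∞) (t : ℝ≥0∞),
          z u.toNNReal * ((μ.map γ) (Icc u (t : ℝ≥0∞))).toReal
            - GbarLeft μ γ u.toNNReal * z u.toNNReal
          = (-((μ.map γ) (Ioi (t : ℝ≥0∞))).toReal) * z u.toNNReal := by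
        intro u hu
        obtain ⟨hu1, hu2⟩ := hu
        have hutop : u ≠ ⊤ := (hu2.trans_lt ENNReal.coe_lt_top).ne
        have hcoe : ((u.toNNReal : ℝ≥0) : ℝ≥0∞) = u := ENNReal.coe_toNNReal hutop
        have hGLu : GbarLeft μ γ u.toNNReal = ((μ.map γ) (Ici u)).toReal := by
          rw [hGbarL u.toNNReal, hcoe]
        have hdecomp : (μ.map γ) (Ici u)
            = (μ.map γ) (Icc u (t : ℝ≥0∞)) + (μ.map γ) (Ioi (t : ℝ≥0∞)) := by
          rw [← Icc_union_Ioi_eq_Ici hu2, measure_union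
            (Set.disjoint_left.mpr fun x hx1 hx2 =>
              absurd (mem_Icc.mp hx1).2 (not_le.mpr (mem_Ioi.mp hx2)))
            measurableSet_Ioi]
        rw [hGLu, hdecomp, ENNReal.toReal_add (measure_ne_top _ _) (measure_ne_top _ _)]
        ring
      have h11' := setIntegral_congr_fun (μ := μ.map γ) (s := Ioc (0 : ℝ≥0∞) (t : ℝ≥0∞))
        (f := fun u : ℝ≥0∞ => z u.toNNReal * ((μ.map γ) (Icc u (t : ℝ≥0∞))).toReal
          - GbarLeft μ γ u.toNNReal * z u.toNNReal)
        (g := fun u : ℝ≥0∞ => (-((μ.map γ) (Ioi (t : ℝ≥0∞))).toReal) * z u.toNNReal)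
        hSmeas h11
      rw [h11', integral_const_mul]
    have hFt : F t = F 0 + ∫ u in Ioc (0 : ℝ≥0∞) (t : ℝ≥0∞), z u.toNNReal ∂(μ.map γ) := by
      simpa using hz.2 t htG
    have hνIoc : ((μ.map γ) (Ioc (0 : ℝ≥0∞) (t : ℝ≥0∞))).toReal
        = Gbar μ γ 0 - Gbar μ γ t := by
      have h12 : (μ.map γ) (Ioi (0 : ℝ≥0∞))
          = (μ.map γ) (Ioc 0 (t : ℝ≥0∞)) + (μ.map γ) (Ioi (t : ℝ≥0∞)) := by
        rw [← Ioc_union_Ioi_eq_Ioi (zero_le : (0 : ℝ≥0∞) ≤ t), measure_union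
          (Set.disjoint_left.mpr fun x hx1 hx2 =>
            absurd (mem_Ioc.mp hx1).2 (not_le.mpr (mem_Ioi.mp hx2)))
          measurableSet_Ioi]
      have h13 : Gbar μ γ 0 = ((μ.map γ) (Ioi (0 : ℝ≥0∞))).toReal := by
        rw [hGbar 0, ENNReal.coe_zero]
      rw [h13, hGbar t, h12, ENNReal.toReal_add (measure_ne_top _ _) (measure_ne_top _ _)]
      ring
    rw [integral_sub hFS hGLζS, hstep1, hstep2, add_sub_assoc,
      ← integral_sub hIccint hGLζS, hstep3]
    have h14 : ∫ u in Ioc (0 : ℝ≥0∞) (t : ℝ≥0∞), z u.toNNReal ∂(μ.map γ) = F t - F 0 := by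
      rw [hFt]; ring
    rw [h14, hνIoc, hGbar t]
    ring
  -- now prove the two parts
  constructor
  · -- forward direction
    intro H hHmeas hHdef hHB
    have hHeqon : ∀ t : ℝ≥0, ∀ x ∈ Ioc (0 : ℝ≥0∞) (t : ℝ≥0∞) ∩ Iio (tG μ γ),
        H x.toNNReal = F x.toNNReal - GbarLeft μ γ x.toNNReal * z x.toNNReal := by
      intro t x hx
      obtain ⟨⟨hxa, hxb⟩, hxc⟩ := hx
      have hxtop : x ≠ ⊤ := (hxb.trans_lt ENNReal.coe_lt_top).ne
      have hcoe : ((x.toNNReal : ℝ≥0) : ℝ≥0∞) = x := ENNReal.coe_toNNReal hxtop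
      refine hHdef x.toNNReal ?_ ?_
      · exact ENNReal.toNNReal_pos (ne_of_gt hxa) hxtop
      · rw [hcoe]; exact hxc
    refine ⟨⟨z, hz⟩, ⟨hHmeas, ?_⟩, ?_, hHB⟩
    · intro t ht
      have hsub : Icc (0 : ℝ≥0∞) (t : ℝ≥0∞) ⊆
          ({0} : Set ℝ≥0∞) ∪ (({(t : ℝ≥0∞)} : Set ℝ≥0∞)
            ∪ (Ioc 0 (t : ℝ≥0∞) ∩ Iio (tG μ γ))) := by
        intro x hx
        obtain ⟨hxa, hxb⟩ := hx
        rcases eq_or_ne x 0 with rfl | hx0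
        · exact Or.inl rfl
        rcases eq_or_ne x (t : ℝ≥0∞) with rfl | hxt
        · exact Or.inr (Or.inl rfl)
        refine Or.inr (Or.inr ⟨⟨pos_iff_ne_zero.mpr hx0, hxb⟩, ?_⟩)
        exact lt_of_lt_of_le (lt_of_le_of_ne hxb hxt) (hTTle t ht)
      refine IntegrableOn.mono_set ?_ hsub
      refine IntegrableOn.union ?_ (IntegrableOn.union ?_ ?_)
      · exact (integrableOn_singleton_iff).mpr (Or.inr (measure_lt_top _ _))
      · exact (integrableOn_singleton_iff).mpr (Or.inr (measure_lt_top _ _))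
      · exact (hV_int t ht).congr_fun (fun x hx => (hHeqon t x hx).symm)
          (measurableSet_Ioc.inter measurableSet_Iio)
    · intro t htG2
      have h13 : ∫ x in Ioc (0 : ℝ≥0∞) (t : ℝ≥0∞), H x.toNNReal ∂(μ.map γ)
          = F 0 * Gbar μ γ 0 - F t * Gbar μ γ t := by
        rw [setIntegral_congr_fun measurableSet_Ioc (f := fun x : ℝ≥0∞ => H x.toNNReal)
            (g := fun x : ℝ≥0∞ =>
            F x.toNNReal - GbarLeft μ γ x.toNNReal * z x.toNNReal)
            (fun x hx => hHeqon t x ⟨hx, lt_of_le_of_lt (mem_Ioc.mp hx).2 htG2⟩), hkeyC t htG2]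
      rw [h13]; ring
  · -- converse direction
    intro H hCM
    obtain ⟨hzex, hHL1, hHid, hHB⟩ := hCM
    refine ⟨?_, hHB⟩
    have hzero : ∀ s : ℝ≥0, (s : ℝ≥0∞) < tG μ γ →
        ∫ x in Ioc (0 : ℝ≥0∞) (s : ℝ≥0∞),
          (H x.toNNReal - (F x.toNNReal - GbarLeft μ γ x.toNNReal * z x.toNNReal))
            ∂(μ.map γ) = 0 := by
      intro s hs
      have hsTT := hmemTT s hs
      have hHint : IntegrableOn (fun x : ℝ≥0∞ => H x.toNNReal) (Ioc 0 (s : ℝ≥0∞)) (μ.map γ) :=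
        (hHL1.2 s hsTT).mono_set Ioc_subset_Icc_self
      have hVint : IntegrableOn (fun x : ℝ≥0∞ =>
          F x.toNNReal - GbarLeft μ γ x.toNNReal * z x.toNNReal)
          (Ioc 0 (s : ℝ≥0∞)) (μ.map γ) :=
        (hV_int s hsTT).mono_set fun x hx => ⟨hx, lt_of_le_of_lt (mem_Ioc.mp hx).2 hs⟩
      rw [integral_sub hHint hVint, hkeyC s hs]
      have h15 := hHid s hs
      linarith
    have hclaim : ∀ s : ℝ≥0, (s : ℝ≥0∞) < tG μ γ →
        (μ.map γ) ({x : ℝ≥0∞ | ¬ (H x.toNNReal = F x.toNNReal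
            - GbarLeft μ γ x.toNNReal * z x.toNNReal)} ∩ Ioc 0 (s : ℝ≥0∞)) = 0 := by
      intro s hs
      have hsTT := hmemTT s hs
      have hHint : IntegrableOn (fun x : ℝ≥0∞ => H x.toNNReal) (Ioc 0 (s : ℝ≥0∞)) (μ.map γ) :=
        (hHL1.2 s hsTT).mono_set Ioc_subset_Icc_self
      have hVint : IntegrableOn (fun x : ℝ≥0∞ =>
          F x.toNNReal - GbarLeft μ γ x.toNNReal * z x.toNNReal)
          (Ioc 0 (s : ℝ≥0∞)) (μ.map γ) :=
        (hV_int s hsTT).mono_set fun x hx => ⟨hx, lt_of_le_of_lt (mem_Ioc.mp hx).2 hs⟩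
      have hDint : Integrable (fun x : ℝ≥0∞ => H x.toNNReal
          - (F x.toNNReal - GbarLeft μ γ x.toNNReal * z x.toNNReal))
          ((μ.map γ).restrict (Ioc 0 (s : ℝ≥0∞))) := hHint.sub hVint
      have hgen : (inferInstance : MeasurableSpace ℝ≥0∞)
          = MeasurableSpace.generateFrom (range (Iic : ℝ≥0∞ → Set ℝ≥0∞)) :=
        BorelSpace.measurable_eq.trans (borel_eq_generateFrom_Iic ℝ≥0∞)
      have hpi : IsPiSystem (range (Iic : ℝ≥0∞ → Set ℝ≥0∞)) := by
        rintro _ ⟨a, rfl⟩ _ ⟨b, rfl⟩ -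
        rw [Iic_inter_Iic]; exact mem_range_self _
      have hall : ∀ A : Set ℝ≥0∞, MeasurableSet A →
          ∫ x in A, (H x.toNNReal - (F x.toNNReal
            - GbarLeft μ γ x.toNNReal * z x.toNNReal))
              ∂((μ.map γ).restrict (Ioc 0 (s : ℝ≥0∞))) = 0 := by
        have hind := MeasurableSpace.induction_on_inter (C := fun (A : Set ℝ≥0∞) _ =>
            ∫ x in A, (H x.toNNReal - (F x.toNNReal
              - GbarLeft μ γ x.toNNReal * z x.toNNReal))
                ∂((μ.map γ).restrict (Ioc 0 (s : ℝ≥0∞))) = 0)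
          hgen hpi ?_ ?_ ?_ ?_
        · exact fun A hA => hind A hA
        · simp
        · rintro _ ⟨a, rfl⟩
          rw [Measure.restrict_restrict measurableSet_Iic]
          rcases le_or_gt (s : ℝ≥0∞) a with h | h
          · rw [show Iic a ∩ Ioc 0 (s : ℝ≥0∞) = Ioc 0 (s : ℝ≥0∞) from
              inter_eq_right.mpr fun x hx => le_trans (mem_Ioc.mp hx).2 h]
            exact hzero s hs
          · have ha : Iic a ∩ Ioc 0 (s : ℝ≥0∞) = Ioc 0 a := by
              ext x
              simp only [mem_inter_iff, mem_Iic, mem_Ioc]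
              exact ⟨fun hh => ⟨hh.2.1, hh.1⟩, fun hh => ⟨hh.2, hh.1, hh.2.trans h.le⟩⟩
            have hatop : a ≠ ⊤ := (h.trans ENNReal.coe_lt_top).ne
            have hcoe : ((a.toNNReal : ℝ≥0) : ℝ≥0∞) = a := ENNReal.coe_toNNReal hatop
            rw [ha, ← hcoe]
            exact hzero a.toNNReal (by rw [hcoe]; exact h.trans hs)
        · intro A hA hCA
          have h14 := integral_add_compl hA hDint
          rw [hCA, zero_add] at h14
          rw [h14]
          exact hzero s hs
        · intro g hdisj hmeasg hCg
          rw [integral_iUnion hmeasg hdisj hDint.integrableOn]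
          simp [hCg]
      have hae := hDint.ae_eq_zero_of_forall_setIntegral_eq_zero
        fun A hA _ => hall A hA
      have h17 := ae_iff.mp hae
      have hae2 : ((μ.map γ).restrict (Ioc 0 (s : ℝ≥0∞)))
          {x : ℝ≥0∞ | ¬ (H x.toNNReal = F x.toNNReal
            - GbarLeft μ γ x.toNNReal * z x.toNNReal)} = 0 := by
        refine measure_mono_null (fun x hx => ?_) h17
        simp only [mem_setOf_eq] at hx ⊢
        intro hDx
        exact hx (sub_eq_zero.mp hDx)
      rw [Measure.restrict_apply' measurableSet_Ioc] at hae2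
      exact hae2
    rw [ae_iff, Measure.restrict_apply' measurableSet_Ioo]
    have hUnull : (μ.map γ) (⋃ q : ℚ,
        (if (((q : ℝ).toNNReal : ℝ≥0) : ℝ≥0∞) < tG μ γ
          then {x : ℝ≥0∞ | ¬ (H x.toNNReal = F x.toNNReal
            - GbarLeft μ γ x.toNNReal * z x.toNNReal)}
              ∩ Ioc 0 ((((q : ℝ).toNNReal : ℝ≥0)) : ℝ≥0∞)
          else (∅ : Set ℝ≥0∞))) = 0 := by
      refine measure_iUnion_null fun q => ?_
      split_ifs with hq
      · exact hclaim _ hq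
      · exact measure_empty
    refine measure_mono_null (fun x hx => ?_) hUnull
    obtain ⟨hx1, hx2⟩ := hx
    obtain ⟨hx2a, hx2b⟩ := hx2
    obtain ⟨q, hq0, hqa, hqb⟩ := ENNReal.lt_iff_exists_rat_btwn.mp hx2b
    refine mem_iUnion.mpr ⟨q, ?_⟩
    rw [if_pos hqb]
    exact ⟨hx1, hx2a, le_of_lt hqa⟩

end WithMeasurableSpace

end SingleJump
end
end

section
/- In Case B, the local martingale M has integrable total variation: E(Var(M)_∞) < ∞. -/
open MeasureTheory Filter Set Topology
open scoped ENNReal NNReal Classical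

noncomputable section

namespace SingleJump

variable {Ω : Type*}

section WithMeasurableSpace

variable [m : MeasurableSpace Ω]

lemma evar_le_of {α : Type*} [LinearOrder α] (f : α → ℝ) (s : Set α)
    (Φ : α → ℝ≥0∞) (K : ℝ≥0∞) (h1 : ∀ t ∈ s, Φ t ≤ K)
    (h2 : ∀ u ∈ s, ∀ v ∈ s, u ≤ v → Φ u + edist (f v) (f u) ≤ Φ v) :
    eVariationOn f s ≤ K := by
  simp only [eVariationOn]
  refine iSup_le ?_
  rintro ⟨n, u, hu, hus⟩
  have key : ∀ m : ℕ, ∑ i ∈ Finset.range m, edist (f (u (i+1))) (f (u i)) ≤ Φ (u m) := by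
    intro m
    induction m with
    | zero => simp
    | succ m ih =>
      rw [Finset.sum_range_succ]
      calc ∑ i ∈ Finset.range m, edist (f (u (i+1))) (f (u i)) + edist (f (u (m+1))) (f (u m))
          ≤ Φ (u m) + edist (f (u (m+1))) (f (u m)) := add_le_add_left ih _
        _ ≤ Φ (u (m+1)) := h2 (u m) (hus m) (u (m+1)) (hus (m+1)) (hu (Nat.le_succ m))
  exact (key n).trans (h1 (u n) (hus n))

lemma evar_piecewise (F : ℝ≥0 → ℝ) (a : ℝ≥0) (c : ℝ) :
    eVariationOn (fun t : ℝ≥0 => if t < a then F t else c) Set.univ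
      ≤ 2 * eVariationOn F (Set.Iio a) + edist c (F 0) := by
  set K := 2 * eVariationOn F (Set.Iio a) + edist c (F 0) with hK
  have hIccIio : ∀ {t : ℝ≥0}, t < a → Icc 0 t ⊆ Iio a :=
    fun {t} ht x hx => lt_of_le_of_lt hx.2 ht
  have hle : ∀ {t : ℝ≥0}, t < a → eVariationOn F (Icc 0 t) ≤ eVariationOn F (Iio a) :=
    fun {t} ht => eVariationOn.mono F (hIccIio ht)
  refine evar_le_of _ _ (fun t => if t < a then eVariationOn F (Set.Icc 0 t) else K) K ?_ ?_
  · intro t _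
    by_cases ht : t < a
    · simp only [if_pos ht]
      refine (hle ht).trans ?_
      calc eVariationOn F (Iio a) ≤ 2 * eVariationOn F (Iio a) := by
            nth_rewrite 1 [← one_mul (eVariationOn F (Iio a))]
            gcongr; norm_num
        _ ≤ K := le_self_add
    · simp [if_neg ht]
  · intro u _ v _ huv
    by_cases hv : v < a
    · have hu : u < a := lt_of_le_of_lt huv hv
      simp only [if_pos hu, if_pos hv]
      have h2 : edist (F v) (F u) ≤ eVariationOn F (Icc u v) :=
        eVariationOn.edist_le F (right_mem_Icc.2 huv) (left_mem_Icc.2 huv)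
      have h3 : eVariationOn F (Icc 0 u) + eVariationOn F (Icc u v)
          = eVariationOn F (Icc 0 v) := by
        have := eVariationOn.Icc_add_Icc F (zero_le : (0:ℝ≥0) ≤ u) huv (mem_univ u)
        simpa using this
      calc eVariationOn F (Icc 0 u) + edist (F v) (F u)
          ≤ eVariationOn F (Icc 0 u) + eVariationOn F (Icc u v) := add_le_add_right h2 _
        _ = eVariationOn F (Icc 0 v) := h3
    · by_cases hu : u < a
      · simp only [if_pos hu, if_neg hv]
        have h0a : (0:ℝ≥0) < a := lt_of_le_of_lt (zero_le : (0:ℝ≥0) ≤ u) hu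
        have hd : edist c (F u) ≤ edist c (F 0) + eVariationOn F (Iio a) :=
          (edist_triangle c (F 0) (F u)).trans
            (add_le_add_right (eVariationOn.edist_le F (mem_Iio.2 h0a) (mem_Iio.2 hu)) _)
        calc eVariationOn F (Icc 0 u) + edist c (F u)
            ≤ eVariationOn F (Iio a) + (edist c (F 0) + eVariationOn F (Iio a)) :=
              add_le_add (hle hu) hd
          _ = K := by rw [hK]; ring
      · simp only [if_neg hu, if_neg hv, edist_self, add_zero, le_refl]

/-- **Theorem 5, Case B.** In Case B the local martingale `M` has integrable total
variation: `E(Var(M)_∞) < ∞`. -/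
theorem stmt_11
(μ : Measure Ω) [IsProbabilityMeasure μ] (γ : Ω → ℝ≥0∞)
    (hγ : Measurable γ) (hpos : 0 < μ {ω | 0 < γ ω})
    (M : ℝ≥0 → Ω → ℝ) (F H : ℝ≥0 → ℝ) (L' : Ω → ℝ)
    (hM : LocalMartingale μ γ M)
    (hFH : CondM μ γ F H)
    (hL'meas : Measurable L')
    (hL'int : ∀ t ∈ TT μ γ,
      Integrable (fun ω => ({ω' | γ ω' ≤ (t : ℝ≥0∞)}.indicator L') ω) μ)
    (hL'cond : CondZeroGivenGamma μ γ L')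
    (hrepr : ∀ᵐ ω ∂μ, ∀ t : ℝ≥0,
      M t ω = if (t : ℝ≥0∞) < γ ω then F t else H (γ ω).toNNReal + L' ω)
    (hB : CaseB μ γ) :
    ∫⁻ ω, totalVar (fun t => M t ω) ∂μ < ⊤ := by
  classical
  obtain ⟨⟨zz, hzMem, hFrep⟩, hHMem, _hIdent, _hLim⟩ := hFH
  obtain ⟨ω₀, hω₀⟩ : {ω | γ ω = tG μ γ ∧ tG μ γ < ⊤}.Nonempty :=
    nonempty_of_measure_ne_zero hB.ne'
  have htop : tG μ γ ≠ ⊤ := hω₀.2.ne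
  set s0 : ℝ≥0 := (tG μ γ).toNNReal with hs0def
  have hs0 : (s0 : ℝ≥0∞) = tG μ γ := ENNReal.coe_toNNReal htop
  have hTT : s0 ∈ TT μ γ := by
    refine lt_of_lt_of_le hB (measure_mono fun ω hω => ?_)
    have h : (s0 : ℝ≥0∞) = γ ω := by rw [hs0, hω.1]
    exact h.le
  have hnull : ∀ t : ℝ≥0, tG μ γ < (t : ℝ≥0∞) → μ {ω | (t : ℝ≥0∞) < γ ω} = 0 := by
    intro t ht
    have h2 : μ {ω | γ ω ≤ (t : ℝ≥0∞)} = 1 := by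
      by_contra h
      have hlt : μ {ω | γ ω ≤ (t : ℝ≥0∞)} < 1 := lt_of_le_of_ne prob_le_one h
      have hmem : (t : ℝ≥0∞) ∈ (fun t : ℝ≥0 => (t : ℝ≥0∞)) ''
          {t : ℝ≥0 | μ {ω | γ ω ≤ (t : ℝ≥0∞)} < 1} := ⟨t, hlt, rfl⟩
      have hle : (t : ℝ≥0∞) ≤ tG μ γ := le_sSup hmem
      exact absurd hle (not_le.2 ht)
    have h3 : {ω | (t : ℝ≥0∞) < γ ω} = {ω | γ ω ≤ (t : ℝ≥0∞)}ᶜ := by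
      ext ω; simp [not_le]
    have hm : MeasurableSet {ω | γ ω ≤ (t : ℝ≥0∞)} := hγ measurableSet_Iic
    rw [h3, measure_compl hm (measure_ne_top μ _), measure_univ, h2, tsub_self]
  have hcast : ∀ n : ℕ, ((s0 + ((n : ℝ≥0) + 1)⁻¹ : ℝ≥0) : ℝ≥0∞)
      = (s0 : ℝ≥0∞) + ((n : ℝ≥0∞) + 1)⁻¹ := by
    intro n
    rw [ENNReal.coe_add, ENNReal.coe_inv (by positivity), ENNReal.coe_add,
      ENNReal.coe_one, ENNReal.coe_natCast]
  have hnullset : μ {ω | (s0 : ℝ≥0∞) < γ ω} = 0 := by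
    have hsub : {ω | (s0 : ℝ≥0∞) < γ ω} ⊆
        ⋃ n : ℕ, {ω | ((s0 + ((n : ℝ≥0) + 1)⁻¹ : ℝ≥0) : ℝ≥0∞) < γ ω} := by
      intro ω hω
      have hω' : (s0 : ℝ≥0∞) < γ ω := hω
      obtain ⟨n, hn⟩ := ENNReal.exists_inv_nat_lt
        (a := γ ω - (s0 : ℝ≥0∞)) (tsub_pos_of_lt hω').ne'
      refine mem_iUnion.2 ⟨n, ?_⟩
      show ((s0 + ((n : ℝ≥0) + 1)⁻¹ : ℝ≥0) : ℝ≥0∞) < γ ω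
      rw [hcast n]
      have h1 : ((n : ℝ≥0∞) + 1)⁻¹ < γ ω - (s0 : ℝ≥0∞) :=
        lt_of_le_of_lt (ENNReal.inv_le_inv.2 le_self_add) hn
      calc (s0 : ℝ≥0∞) + ((n : ℝ≥0∞) + 1)⁻¹
          < (s0 : ℝ≥0∞) + (γ ω - (s0 : ℝ≥0∞)) :=
            ENNReal.add_lt_add_left ENNReal.coe_ne_top h1
        _ = γ ω := add_tsub_cancel_of_le hω'.le
    refine measure_mono_null hsub (measure_iUnion_null fun n => hnull _ ?_)
    rw [hcast n, hs0]
    exact ENNReal.lt_add_right htop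
      (ENNReal.inv_ne_zero.2 (by simp))
  have hae : ∀ᵐ ω ∂μ, γ ω ≤ (s0 : ℝ≥0∞) := by
    have hset : {ω | ¬ γ ω ≤ (s0 : ℝ≥0∞)} = {ω | (s0 : ℝ≥0∞) < γ ω} := by
      ext ω; simp [not_le]
    rw [ae_iff, hset]
    exact hnullset
  -- splitting of integrals
  have hsplit : ∀ g : ℝ≥0∞ → ℝ, IntegrableOn g (Icc 0 (s0 : ℝ≥0∞)) (μ.map γ) →
      ∀ u v : ℝ≥0, u ≤ v → v ≤ s0 →
      (∫ x in Ioc (0 : ℝ≥0∞) (u : ℝ≥0∞), g x ∂(μ.map γ))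
        + ∫ x in Ioc (u : ℝ≥0∞) (v : ℝ≥0∞), g x ∂(μ.map γ)
        = ∫ x in Ioc (0 : ℝ≥0∞) (v : ℝ≥0∞), g x ∂(μ.map γ) := by
    intro g hg u v huv hvs
    have h1 : IntegrableOn g (Ioc (0 : ℝ≥0∞) (u : ℝ≥0∞)) (μ.map γ) :=
      hg.mono_set fun x hx => ⟨zero_le, hx.2.trans (ENNReal.coe_le_coe.2 (huv.trans hvs))⟩
    have h2 : IntegrableOn g (Ioc (u : ℝ≥0∞) (v : ℝ≥0∞)) (μ.map γ) :=
      hg.mono_set fun x hx => ⟨zero_le, hx.2.trans (ENNReal.coe_le_coe.2 hvs)⟩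
    rw [← setIntegral_union (Set.Ioc_disjoint_Ioc_of_le le_rfl) measurableSet_Ioc h1 h2,
      Set.Ioc_union_Ioc_eq_Ioc zero_le (ENNReal.coe_le_coe.2 huv)]
  have hzInt : IntegrableOn (fun x : ℝ≥0∞ => zz x.toNNReal) (Icc 0 (s0 : ℝ≥0∞)) (μ.map γ) :=
    hzMem.2 s0 hTT
  have hzAbs : IntegrableOn (fun x : ℝ≥0∞ => |zz x.toNNReal|) (Icc 0 (s0 : ℝ≥0∞)) (μ.map γ) :=
    hzInt.abs
  have hFdiff : ∀ u v : ℝ≥0, u ≤ v → v < s0 →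
      F v - F u = ∫ x in Ioc (u : ℝ≥0∞) (v : ℝ≥0∞), zz x.toNNReal ∂(μ.map γ) := by
    intro u v huv hv
    have hu' : (u : ℝ≥0∞) < tG μ γ := by
      rw [← hs0]; exact_mod_cast lt_of_le_of_lt huv hv
    have hv' : (v : ℝ≥0∞) < tG μ γ := by rw [← hs0]; exact_mod_cast hv
    have hs := hsplit _ hzInt u v huv (le_of_lt hv)
    rw [hFrep u hu', hFrep v hv', ← hs]
    ring
  set Bz : ℝ≥0∞ :=
    ENNReal.ofReal (∫ x in Ioc (0 : ℝ≥0∞) (s0 : ℝ≥0∞), |zz x.toNNReal| ∂(μ.map γ)) with hBzdef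
  have hBzne : Bz ≠ ⊤ := ENNReal.ofReal_ne_top
  have hVarF : eVariationOn F (Iio s0) ≤ Bz := by
    refine evar_le_of F (Iio s0)
      (fun t => ENNReal.ofReal
        (∫ x in Ioc (0 : ℝ≥0∞) (t : ℝ≥0∞), |zz x.toNNReal| ∂(μ.map γ))) Bz ?_ ?_
    · intro t ht
      rw [hBzdef]
      refine ENNReal.ofReal_le_ofReal ?_
      rw [← hsplit _ hzAbs t s0 (le_of_lt ht) le_rfl]
      have h0 : 0 ≤ ∫ x in Ioc ((t : ℝ≥0) : ℝ≥0∞) (s0 : ℝ≥0∞), |zz x.toNNReal| ∂(μ.map γ) :=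
        integral_nonneg fun x => abs_nonneg _
      linarith
    · intro u _ v hv huv
      have hdiff := hFdiff u v huv hv
      have habs : |F v - F u|
          ≤ ∫ x in Ioc (u : ℝ≥0∞) (v : ℝ≥0∞), |zz x.toNNReal| ∂(μ.map γ) := by
        rw [hdiff]
        simpa [Real.norm_eq_abs] using
          norm_integral_le_integral_norm
            (μ := (μ.map γ).restrict (Ioc (u : ℝ≥0∞) (v : ℝ≥0∞)))
            (fun x : ℝ≥0∞ => zz x.toNNReal)
      have hedist : edist (F v) (F u)
          ≤ ENNReal.ofReal
            (∫ x in Ioc (u : ℝ≥0∞) (v : ℝ≥0∞), |zz x.toNNReal| ∂(μ.map γ)) := by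
        rw [edist_dist, Real.dist_eq]
        exact ENNReal.ofReal_le_ofReal habs
      calc ENNReal.ofReal (∫ x in Ioc (0 : ℝ≥0∞) (u : ℝ≥0∞), |zz x.toNNReal| ∂(μ.map γ))
            + edist (F v) (F u)
          ≤ ENNReal.ofReal (∫ x in Ioc (0 : ℝ≥0∞) (u : ℝ≥0∞), |zz x.toNNReal| ∂(μ.map γ))
            + ENNReal.ofReal
              (∫ x in Ioc (u : ℝ≥0∞) (v : ℝ≥0∞), |zz x.toNNReal| ∂(μ.map γ)) :=
            add_le_add_right hedist _
        _ = ENNReal.ofReal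
              ((∫ x in Ioc (0 : ℝ≥0∞) (u : ℝ≥0∞), |zz x.toNNReal| ∂(μ.map γ))
                + ∫ x in Ioc (u : ℝ≥0∞) (v : ℝ≥0∞), |zz x.toNNReal| ∂(μ.map γ)) :=
            (ENNReal.ofReal_add (integral_nonneg fun x => abs_nonneg _)
              (integral_nonneg fun x => abs_nonneg _)).symm
        _ = ENNReal.ofReal
              (∫ x in Ioc (0 : ℝ≥0∞) (v : ℝ≥0∞), |zz x.toNNReal| ∂(μ.map γ)) := by
            rw [hsplit _ hzAbs u v huv (le_of_lt hv)]
  have hL'Int : Integrable L' μ := by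
    refine (hL'int s0 hTT).congr ?_
    filter_upwards [hae] with ω hω
    exact Set.indicator_of_mem (show ω ∈ {ω' | γ ω' ≤ (s0 : ℝ≥0∞)} from hω) L'
  have hHmeasNN : Measurable fun x : ℝ≥0∞ => (‖H x.toNNReal‖₊ : ℝ≥0∞) :=
    ((hHMem.1.comp ENNReal.measurable_toNNReal).nnnorm).coe_nnreal_ennreal
  have hHfin : ∫⁻ ω, (‖H (γ ω).toNNReal‖₊ : ℝ≥0∞) ∂μ < ⊤ := by
    rw [← lintegral_map hHmeasNN hγ]
    have hcompl : (Icc (0 : ℝ≥0∞) (s0 : ℝ≥0∞))ᶜ = Ioi (s0 : ℝ≥0∞) := by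
      ext x; simp [not_le]
    have hν0 : (μ.map γ) ((Icc (0 : ℝ≥0∞) (s0 : ℝ≥0∞))ᶜ) = 0 := by
      rw [hcompl, Measure.map_apply hγ measurableSet_Ioi]
      exact hnullset
    rw [← lintegral_add_compl (fun x : ℝ≥0∞ => (‖H x.toNNReal‖₊ : ℝ≥0∞))
      (measurableSet_Icc (a := (0 : ℝ≥0∞)) (b := (s0 : ℝ≥0∞))),
      setLIntegral_measure_zero _ _ hν0, add_zero]
    exact (hHMem.2 s0 hTT).2
  have hbound : ∀ᵐ ω ∂μ, totalVar (fun t => M t ω)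
      ≤ 2 * (‖F 0‖₊ : ℝ≥0∞) + 2 * Bz
        + 2 * ((‖H (γ ω).toNNReal‖₊ : ℝ≥0∞) + (‖L' ω‖₊ : ℝ≥0∞)) := by
    filter_upwards [hrepr, hae] with ω hMω hγω
    set a : ℝ≥0 := (γ ω).toNNReal with hadef
    have hγne : γ ω ≠ ⊤ := (lt_of_le_of_lt hγω ENNReal.coe_lt_top).ne
    have hγa : γ ω = (a : ℝ≥0∞) := (ENNReal.coe_toNNReal hγne).symm
    have has0 : a ≤ s0 := by
      rw [hγa] at hγω; exact_mod_cast hγω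
    set c : ℝ := H a + L' ω with hcdef
    have hfun : (fun t => M t ω) = fun t : ℝ≥0 => if t < a then F t else c := by
      funext t
      rw [hMω t, hcdef, hγa]
      simp only [ENNReal.coe_lt_coe, ENNReal.toNNReal_coe]
    rw [hfun]
    simp only [totalVar]
    have hc : (‖c‖₊ : ℝ≥0∞) ≤ (‖H a‖₊ : ℝ≥0∞) + (‖L' ω‖₊ : ℝ≥0∞) := by
      rw [hcdef]
      exact_mod_cast nnnorm_add_le (H a) (L' ω)
    have hIioa : eVariationOn F (Iio a) ≤ Bz :=
      (eVariationOn.mono F fun x hx => lt_of_lt_of_le hx has0).trans hVarF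
    have hjump : edist c (F 0) ≤ (‖c‖₊ : ℝ≥0∞) + (‖F 0‖₊ : ℝ≥0∞) := by
      rw [edist_nndist, nndist_eq_nnnorm]
      exact_mod_cast nnnorm_sub_le c (F 0)
    have hf0 : (‖(if (0 : ℝ≥0) < a then F 0 else c)‖₊ : ℝ≥0∞)
        ≤ (‖F 0‖₊ : ℝ≥0∞) + (‖c‖₊ : ℝ≥0∞) := by
      by_cases h : (0 : ℝ≥0) < a
      · rw [if_pos h]; exact le_self_add
      · rw [if_neg h]; exact le_add_self
    have hvar' : eVariationOn (fun t : ℝ≥0 => if t < a then F t else c) univ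
        ≤ 2 * Bz + ((‖c‖₊ : ℝ≥0∞) + (‖F 0‖₊ : ℝ≥0∞)) :=
      (evar_piecewise F a c).trans (add_le_add (mul_le_mul_right hIioa 2) hjump)
    calc (‖(fun t : ℝ≥0 => if t < a then F t else c) 0‖₊ : ℝ≥0∞)
          + eVariationOn (fun t : ℝ≥0 => if t < a then F t else c) univ
        ≤ ((‖F 0‖₊ : ℝ≥0∞) + (‖c‖₊ : ℝ≥0∞))
            + (2 * Bz + ((‖c‖₊ : ℝ≥0∞) + (‖F 0‖₊ : ℝ≥0∞))) := add_le_add hf0 hvar'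
      _ = 2 * (‖F 0‖₊ : ℝ≥0∞) + 2 * Bz + 2 * (‖c‖₊ : ℝ≥0∞) := by ring
      _ ≤ 2 * (‖F 0‖₊ : ℝ≥0∞) + 2 * Bz
            + 2 * ((‖H a‖₊ : ℝ≥0∞) + (‖L' ω‖₊ : ℝ≥0∞)) := by gcongr
  refine lt_of_le_of_lt (lintegral_mono_ae hbound) ?_
  have hmeas1 : Measurable fun ω => (‖H (γ ω).toNNReal‖₊ : ℝ≥0∞) := hHmeasNN.comp hγ
  have hmeas2 : Measurable fun ω => (‖L' ω‖₊ : ℝ≥0∞) := hL'meas.nnnorm.coe_nnreal_ennreal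
  calc ∫⁻ ω, (2 * (‖F 0‖₊ : ℝ≥0∞) + 2 * Bz
        + 2 * ((‖H (γ ω).toNNReal‖₊ : ℝ≥0∞) + (‖L' ω‖₊ : ℝ≥0∞))) ∂μ
      = (2 * (‖F 0‖₊ : ℝ≥0∞) + 2 * Bz) * μ univ
        + 2 * ∫⁻ ω, ((‖H (γ ω).toNNReal‖₊ : ℝ≥0∞) + (‖L' ω‖₊ : ℝ≥0∞)) ∂μ := by
        rw [lintegral_add_left measurable_const, lintegral_const,
          lintegral_const_mul 2 (f := fun ω => (‖H (γ ω).toNNReal‖₊ : ℝ≥0∞) + (‖L' ω‖₊ : ℝ≥0∞)) (hmeas1.add hmeas2)]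
    _ = (2 * (‖F 0‖₊ : ℝ≥0∞) + 2 * Bz)
        + 2 * ((∫⁻ ω, (‖H (γ ω).toNNReal‖₊ : ℝ≥0∞) ∂μ)
          + ∫⁻ ω, (‖L' ω‖₊ : ℝ≥0∞) ∂μ) := by
        rw [measure_univ, mul_one, lintegral_add_left hmeas1]
    _ < ⊤ := by
        have hL'fin : ∫⁻ ω, (‖L' ω‖₊ : ℝ≥0∞) ∂μ < ⊤ := hL'Int.2
        refine ENNReal.add_lt_top.2 ⟨ENNReal.add_lt_top.2 ⟨?_, ?_⟩, ?_⟩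
        · exact ENNReal.mul_lt_top (by norm_num) ENNReal.coe_lt_top
        · exact ENNReal.mul_lt_top (by norm_num) hBzne.lt_top
        · exact ENNReal.mul_lt_top (by norm_num)
            (ENNReal.add_lt_top.2 ⟨hHfin, hL'fin⟩)


end WithMeasurableSpace

end SingleJump
end
end

section
/- In Case A, the following are equivalent: (a) either the limit M_∞ = lim_{t→∞} M_t fails to exist as a finite limit with positive probability, or M_∞ exists almost surely but E|M_∞| = ∞; (b) E(|L′|·1_{γ<∞}) = ∞ or ∫_{[0,t_G)} |H(s)| dG(s) = ∞. -/
open MeasureTheory Filter Set Topology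
open scoped ENNReal NNReal Classical

noncomputable section

namespace SingleJump

variable {Ω : Type*}

section WithMeasurableSpace

variable [m : MeasurableSpace Ω]

section AuxSJ

variable {μ : Measure Ω} {γ : Ω → ℝ≥0∞}

lemma measure_le_eq_one [IsProbabilityMeasure μ] {s : ℝ≥0}
    (hs : tG μ γ < (s : ℝ≥0∞)) : μ {ω | γ ω ≤ (s : ℝ≥0∞)} = 1 := by
  by_contra h
  have hmem : (s : ℝ≥0∞) ∈ (fun t : ℝ≥0 => (t : ℝ≥0∞)) ''
      {t : ℝ≥0 | μ {ω | γ ω ≤ (t : ℝ≥0∞)} < 1} :=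
    ⟨s, lt_of_le_of_ne prob_le_one h, rfl⟩
  exact absurd (le_sSup hmem) (not_le.2 hs)

lemma measure_gt_eq_zero [IsProbabilityMeasure μ] (hγ : Measurable γ) {s : ℝ≥0}
    (hs : tG μ γ < (s : ℝ≥0∞)) : μ {ω | (s : ℝ≥0∞) < γ ω} = 0 := by
  have h1 : {ω | (s : ℝ≥0∞) < γ ω} = {ω | γ ω ≤ (s : ℝ≥0∞)}ᶜ := by
    ext ω; simp [not_le]
  rw [h1, prob_compl_eq_zero_iff (s := {ω | γ ω ≤ (s : ℝ≥0∞)}) (hγ measurableSet_Iic)]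
  exact measure_le_eq_one hs

lemma mem_TT_of_lt_tG [IsProbabilityMeasure μ] (hγ : Measurable γ) {t : ℝ≥0}
    (h : (t : ℝ≥0∞) < tG μ γ) : t ∈ TT μ γ := by
  obtain ⟨b, ⟨s, hs, rfl⟩, hb⟩ := lt_sSup_iff.1 h
  have h1 : μ {ω | γ ω ≤ (s : ℝ≥0∞)}ᶜ ≠ 0 := by
    intro h0
    rw [prob_compl_eq_zero_iff (s := {ω | γ ω ≤ (s : ℝ≥0∞)}) (hγ measurableSet_Iic)] at h0
    exact absurd h0 hs.ne
  have h2 : {ω | γ ω ≤ (s : ℝ≥0∞)}ᶜ ⊆ {ω | (t : ℝ≥0∞) ≤ γ ω} := by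
    intro ω hω
    simp only [mem_compl_iff, mem_setOf_eq, not_le] at hω
    exact le_of_lt (lt_of_lt_of_le hb hω.le)
  exact pos_iff_ne_zero.2 fun h0 => h1 (measure_mono_null h2 h0)

lemma tG_pos [IsProbabilityMeasure μ] (hγ : Measurable γ)
    (hpos : 0 < μ {ω | 0 < γ ω}) : 0 < tG μ γ := by
  by_contra h
  push_neg at h
  have htG : tG μ γ = 0 := le_antisymm h bot_le
  have hcover : {ω | 0 < γ ω} ⊆ ⋃ n : ℕ, {ω | (((n : ℝ≥0) + 1)⁻¹ : ℝ≥0∞) < γ ω} := by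
    intro ω hω
    rcases eq_or_ne (γ ω) ⊤ with hT | hT
    · exact mem_iUnion.2 ⟨0, by simp [hT]⟩
    · have h0 : (γ ω)⁻¹ ≠ ⊤ := by
        simpa [ENNReal.inv_eq_top] using (mem_setOf_eq ▸ hω).ne'
      obtain ⟨n, hn⟩ := ENNReal.exists_nat_gt h0
      refine mem_iUnion.2 ⟨n, ?_⟩
      have hlt : (γ ω)⁻¹ < ((n : ℝ≥0) + 1 : ℝ≥0∞) := by
        refine lt_of_lt_of_le hn ?_
        push_cast
        exact le_add_of_nonneg_right zero_le_one
      have := ENNReal.inv_lt_inv.2 hlt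
      rwa [inv_inv] at this
  have hnull : ∀ n : ℕ, μ {ω | (((n : ℝ≥0) + 1)⁻¹ : ℝ≥0∞) < γ ω} = 0 := by
    intro n
    have h1 : tG μ γ < ((((n : ℝ≥0) + 1)⁻¹ : ℝ≥0) : ℝ≥0∞) := by
      rw [htG]
      exact ENNReal.coe_pos.2 (by positivity)
    have := measure_gt_eq_zero (μ := μ) hγ h1
    simpa [ENNReal.coe_inv, ENNReal.coe_add] using this
  have : μ {ω | 0 < γ ω} = 0 :=
    measure_mono_null hcover (measure_iUnion_null hnull)
  exact absurd this hpos.ne'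

lemma caseA_null [IsProbabilityMeasure μ] (hγ : Measurable γ) (hA : CaseA μ γ) :
    μ {ω | tG μ γ ≤ γ ω ∧ γ ω ≠ ⊤} = 0 := by
  have hsub : {ω | tG μ γ ≤ γ ω ∧ γ ω ≠ ⊤} ⊆
      {ω | γ ω = tG μ γ ∧ tG μ γ < ⊤} ∪
        ⋃ q : ℚ, {ω | tG μ γ < ((Real.toNNReal q : ℝ≥0) : ℝ≥0∞) ∧
          ((Real.toNNReal q : ℝ≥0) : ℝ≥0∞) < γ ω} := by
    rintro ω ⟨h1, h2⟩
    rcases eq_or_lt_of_le h1 with heq | hlt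
    · exact Or.inl ⟨heq.symm, lt_of_le_of_lt h1 (lt_top_iff_ne_top.2 h2)⟩
    · right
      have htGne : tG μ γ ≠ ⊤ := fun hT => h2 (top_le_iff.1 (hT ▸ h1))
      obtain ⟨c, hc1, hc2⟩ := exists_between hlt
      have hcne : c ≠ ⊤ := fun hT => h2 (top_le_iff.1 (hT ▸ hc2.le))
      have htr : (tG μ γ).toReal < c.toReal :=
        (ENNReal.toReal_lt_toReal htGne hcne).2 hc1
      obtain ⟨q, hq1, hq2⟩ := exists_rat_btwn htr
      refine mem_iUnion.2 ⟨q, ?_, ?_⟩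
      · rw [show ((Real.toNNReal q : ℝ≥0) : ℝ≥0∞) = ENNReal.ofReal (q : ℝ) from rfl]
        exact (ENNReal.lt_ofReal_iff_toReal_lt htGne).2 hq1
      · rw [show ((Real.toNNReal q : ℝ≥0) : ℝ≥0∞) = ENNReal.ofReal (q : ℝ) from rfl]
        refine lt_of_lt_of_le ?_ hc2.le
        exact (ENNReal.ofReal_lt_iff_lt_toReal (le_of_lt (lt_of_le_of_lt
          ENNReal.toReal_nonneg hq1)) hcne).2 hq2
  refine measure_mono_null hsub ?_
  refine measure_union_null hA (measure_iUnion_null fun q => ?_)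
  by_cases hq : tG μ γ < ((Real.toNNReal q : ℝ≥0) : ℝ≥0∞)
  · refine measure_mono_null (fun ω hω => hω.2) (measure_gt_eq_zero hγ hq)
  · have : {ω | tG μ γ < ((Real.toNNReal q : ℝ≥0) : ℝ≥0∞) ∧
        ((Real.toNNReal q : ℝ≥0) : ℝ≥0∞) < γ ω} = ∅ := by
      ext ω; simp only [mem_setOf_eq, mem_empty_iff_false, iff_false]
      exact fun h => hq h.1
    simp [this]

end AuxSJ

/-- **Theorem 5 (i), Case A.** `M` has type 1 — i.e. the limit `M_∞` fails to exist as a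
finite limit with positive probability, or it exists a.s. but is not integrable — iff
`E(|L'|·1_{γ<∞}) = ∞` or `∫_{[0,t_G)} |H| dG = ∞`. -/
theorem stmt_12
(μ : Measure Ω) [IsProbabilityMeasure μ] (γ : Ω → ℝ≥0∞)
    (hγ : Measurable γ) (hpos : 0 < μ {ω | 0 < γ ω})
    (M : ℝ≥0 → Ω → ℝ) (F H : ℝ≥0 → ℝ) (L' : Ω → ℝ)
    (hM : LocalMartingale μ γ M)
    (hFH : CondM μ γ F H)
    (hL'meas : Measurable L')
    (hL'int : ∀ t ∈ TT μ γ,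
      Integrable (fun ω => ({ω' | γ ω' ≤ (t : ℝ≥0∞)}.indicator L') ω) μ)
    (hL'cond : CondZeroGivenGamma μ γ L')
    (hrepr : ∀ᵐ ω ∂μ, ∀ t : ℝ≥0,
      M t ω = if (t : ℝ≥0∞) < γ ω then F t else H (γ ω).toNNReal + L' ω)
    (hA : CaseA μ γ) :
    (¬ ∃ Z : Ω → ℝ,
        (∀ᵐ ω ∂μ, Tendsto (fun t => M t ω) atTop (𝓝 (Z ω))) ∧ Integrable Z μ) ↔
      (¬ Integrable (fun ω => ({ω' | γ ω' < ⊤}.indicator L') ω) μ ∨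
        ¬ IntegrableOn (fun x : ℝ≥0∞ => H x.toNNReal) (Iio (tG μ γ)) (μ.map γ)) := by
  classical
  obtain ⟨-, ⟨hHmeas, hHint⟩, hcond, -⟩ := hFH
  set ν := μ.map γ with hν
  set g : ℝ≥0∞ → ℝ := fun x => H x.toNNReal with hgdef
  have hgmeas : Measurable g := hHmeas.comp ENNReal.measurable_toNNReal
  have hsetlt : MeasurableSet {ω | γ ω < ⊤} := hγ measurableSet_Iio
  -- the law of `γ` puts no mass on `[t_G, ∞)`
  have hmapnull : ν (Iio ⊤ \ Iio (tG μ γ)) = 0 := by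
    rw [hν, Measure.map_apply hγ (measurableSet_Iio.diff measurableSet_Iio)]
    refine measure_mono_null ?_ (caseA_null hγ hA)
    intro ω hω
    simp only [mem_preimage, mem_diff, mem_Iio, not_lt] at hω
    exact ⟨hω.2, hω.1.ne⟩
  -- extension of integrability from `Iio t_G` to `Iio ⊤`, transported to `Ω`
  have hext : IntegrableOn g (Iio (tG μ γ)) ν →
      (IntegrableOn g (Iio (⊤ : ℝ≥0∞)) ν ∧
        Integrable ({ω' | γ ω' < ⊤}.indicator (fun ω' => g (γ ω'))) μ) := by
    intro h
    have hnullint : IntegrableOn g (Iio ⊤ \ Iio (tG μ γ)) ν := by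
      rw [IntegrableOn, Measure.restrict_eq_zero.2 hmapnull]
      exact integrable_zero_measure
    have h1 : IntegrableOn g (Iio (⊤ : ℝ≥0∞)) ν :=
      (h.union hnullint).mono_set fun x hx =>
        (em (x ∈ Iio (tG μ γ))).imp id fun hn => ⟨hx, hn⟩
    refine ⟨h1, ?_⟩
    have h2 : Integrable ((Iio (⊤ : ℝ≥0∞)).indicator g) ν :=
      (integrable_indicator_iff measurableSet_Iio).2 h1
    have h3 : Integrable (((Iio (⊤ : ℝ≥0∞)).indicator g) ∘ γ) μ :=
      (integrable_map_measure
        (hgmeas.indicator measurableSet_Iio).aestronglyMeasurable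
        hγ.aemeasurable).1 h2
    refine h3.congr (Eventually.of_forall fun ω => ?_)
    exact (Set.indicator_comp_right γ (s := Iio (⊤ : ℝ≥0∞)) (g := g) (x := ω)).symm
  -- eventually-constant limits on `{γ < ∞}`
  have hconst : ∀ ω : Ω,
      (∀ t : ℝ≥0, M t ω = if (t : ℝ≥0∞) < γ ω then F t else H (γ ω).toNNReal + L' ω) →
      γ ω < ⊤ → Tendsto (fun t => M t ω) atTop (𝓝 (H (γ ω).toNNReal + L' ω)) := by
    intro ω hω hlt
    have hev : ∀ᶠ t : ℝ≥0 in atTop, M t ω = H (γ ω).toNNReal + L' ω := by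
      filter_upwards [eventually_ge_atTop (γ ω).toNNReal] with t ht
      rw [hω t, if_neg (not_lt.2 ?_)]
      calc γ ω = ((γ ω).toNNReal : ℝ≥0∞) := (ENNReal.coe_toNNReal hlt.ne).symm
        _ ≤ (t : ℝ≥0∞) := ENNReal.coe_le_coe.2 ht
    exact Tendsto.congr' (Eventually.mono hev fun t h => h.symm) tendsto_const_nhds
  rw [← not_and_or, not_iff_not]
  constructor
  · -- existence of an integrable limit implies both integrability conditions
    rintro ⟨Z, hZconv, hZint⟩
    have hid : ∀ᵐ ω ∂μ, γ ω < ⊤ → Z ω = H (γ ω).toNNReal + L' ω := by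
      filter_upwards [hrepr, hZconv] with ω hω hconv hlt
      exact tendsto_nhds_unique hconv (hconst ω hω hlt)
    set W : Ω → ℝ := fun ω => if γ ω < ⊤ then H (γ ω).toNNReal + L' ω else 0 with hWdef
    have hWeq : W =ᵐ[μ] {ω | γ ω < ⊤}.indicator Z := by
      filter_upwards [hid] with ω hω
      by_cases hlt : γ ω < ⊤
      · simp [hWdef, hlt, Set.indicator_of_mem (hlt : ω ∈ {ω | γ ω < ⊤}), hω hlt]
      · simp [hWdef, hlt, Set.indicator_of_notMem (hlt : ω ∉ {ω | γ ω < ⊤})]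
    have hWint : Integrable W μ := (hZint.indicator hsetlt).congr hWeq.symm
    set C : ℝ := ∫ ω, |W ω| ∂μ with hCdef
    -- key bound on compact time windows
    have hclaim : ∀ t ∈ TT μ γ,
        ∫⁻ x in Icc 0 (t : ℝ≥0∞), (‖g x‖₊ : ℝ≥0∞) ∂ν ≤ ENNReal.ofReal C := by
      intro t ht
      have hBm : MeasurableSet (Icc (0 : ℝ≥0∞) (t : ℝ≥0∞)) := measurableSet_Icc
      set P : Set ℝ≥0∞ := Icc 0 (t : ℝ≥0∞) ∩ {x | 0 ≤ g x} with hPdef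
      set N : Set ℝ≥0∞ := Icc 0 (t : ℝ≥0∞) ∩ {x | g x < 0} with hNdef
      have hPm : MeasurableSet P :=
        hBm.inter (measurableSet_le measurable_const hgmeas)
      have hNm : MeasurableSet N :=
        hBm.inter (measurableSet_lt hgmeas measurable_const)
      have hPsub : P ⊆ Icc 0 (t : ℝ≥0∞) := inter_subset_left
      have hNsub : N ⊆ Icc 0 (t : ℝ≥0∞) := inter_subset_left
      have hPN : Icc (0 : ℝ≥0∞) (t : ℝ≥0∞) = P ∪ N := by
        rw [hPdef, hNdef, ← inter_union_distrib_left]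
        have : {x : ℝ≥0∞ | 0 ≤ g x} ∪ {x | g x < 0} = univ := by
          ext x; simp [le_or_gt]
        rw [this, inter_univ]
      have hdisj : Disjoint P N := by
        refine Set.disjoint_left.2 fun x hx hx' => ?_
        have h1 : 0 ≤ g x := hx.2
        have h2 : g x < 0 := hx'.2
        exact absurd h1 (not_le.2 h2)
      have hgB : IntegrableOn g (Icc 0 (t : ℝ≥0∞)) ν := hHint t ht
      have hL'B : IntegrableOn L' (γ ⁻¹' Icc 0 (t : ℝ≥0∞)) μ := by
        have h1 := hL'int t ht
        have hms : MeasurableSet {ω' | γ ω' ≤ (t : ℝ≥0∞)} := hγ measurableSet_Iic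
        have h2 : IntegrableOn L' {ω' | γ ω' ≤ (t : ℝ≥0∞)} μ :=
          (integrable_indicator_iff hms).1 h1
        exact h2.mono_set fun ω hω => hω.2
      have hkey : ∀ s : Set ℝ≥0∞, MeasurableSet s → s ⊆ Icc 0 (t : ℝ≥0∞) →
          ∫ x in s, g x ∂ν = ∫ ω in γ ⁻¹' s, W ω ∂μ := by
        intro s hsm hsub
        have h1 : ∫ x in s, g x ∂ν = ∫ ω in γ ⁻¹' s, g (γ ω) ∂μ :=
          setIntegral_map hsm hgmeas.aestronglyMeasurable hγ.aemeasurable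
        have hLs : IntegrableOn L' (γ ⁻¹' s) μ := hL'B.mono_set (preimage_mono hsub)
        have h2 : ∫ ω in γ ⁻¹' s, g (γ ω) ∂μ = ∫ ω in γ ⁻¹' s, (W ω - L' ω) ∂μ := by
          refine setIntegral_congr_fun (hγ hsm) fun ω hω => ?_
          have hlt : γ ω < ⊤ := lt_of_le_of_lt (hsub hω).2 ENNReal.coe_lt_top
          simp only [hWdef, if_pos hlt, hgdef]
          ring
        rw [h1, h2, integral_sub hWint.integrableOn hLs, hL'cond s hsm hLs, sub_zero]
      have hbound : ∀ s : Set ℝ≥0∞, MeasurableSet s → s ⊆ Icc 0 (t : ℝ≥0∞) →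
          |∫ x in s, g x ∂ν| ≤ ∫ ω in γ ⁻¹' s, |W ω| ∂μ := by
        intro s hsm hsub
        rw [hkey s hsm hsub]
        simpa [Real.norm_eq_abs] using
          norm_integral_le_integral_norm (μ := μ.restrict (γ ⁻¹' s)) W
      have hsplit : ∫ x in Icc 0 (t : ℝ≥0∞), |g x| ∂ν =
          (∫ x in P, g x ∂ν) + -(∫ x in N, g x ∂ν) := by
        have habs : IntegrableOn (fun x => |g x|) (Icc 0 (t : ℝ≥0∞)) ν := hgB.abs
        have h1 : ∫ x in Icc 0 (t : ℝ≥0∞), |g x| ∂ν =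
            (∫ x in P, |g x| ∂ν) + ∫ x in N, |g x| ∂ν := by
          rw [hPN] at habs ⊢
          exact setIntegral_union hdisj hNm (habs.mono_set subset_union_left)
            (habs.mono_set subset_union_right)
        have h2 : ∫ x in P, |g x| ∂ν = ∫ x in P, g x ∂ν :=
          setIntegral_congr_fun hPm fun x hx => abs_of_nonneg hx.2
        have h3 : ∫ x in N, |g x| ∂ν = -∫ x in N, g x ∂ν := by
          rw [← integral_neg]
          exact setIntegral_congr_fun hNm fun x hx => abs_of_neg hx.2
        rw [h1, h2, h3]
      have hWabs : Integrable (fun ω => |W ω|) μ := hWint.abs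
      have hrealbound : ∫ x in Icc 0 (t : ℝ≥0∞), |g x| ∂ν ≤ C := by
        rw [hsplit]
        have hP := hbound P hPm hPsub
        have hN := hbound N hNm hNsub
        have hsum : (∫ ω in γ ⁻¹' P, |W ω| ∂μ) + ∫ ω in γ ⁻¹' N, |W ω| ∂μ =
            ∫ ω in γ ⁻¹' P ∪ γ ⁻¹' N, |W ω| ∂μ :=
          (setIntegral_union (hdisj.preimage γ) (hγ hNm)
            hWabs.integrableOn hWabs.integrableOn).symm
        have hle : ∫ ω in γ ⁻¹' P ∪ γ ⁻¹' N, |W ω| ∂μ ≤ C := by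
          refine setIntegral_le_integral hWabs (Eventually.of_forall fun ω => ?_)
          exact abs_nonneg _
        calc (∫ x in P, g x ∂ν) + -(∫ x in N, g x ∂ν)
            ≤ (∫ ω in γ ⁻¹' P, |W ω| ∂μ) + ∫ ω in γ ⁻¹' N, |W ω| ∂μ :=
              add_le_add (le_trans (le_abs_self _) hP)
                (le_trans (neg_le_abs _) hN)
          _ ≤ C := hsum ▸ hle
      have hofreal : ENNReal.ofReal (∫ x in Icc 0 (t : ℝ≥0∞), ‖g x‖ ∂ν) =
          ∫⁻ x in Icc 0 (t : ℝ≥0∞), (‖g x‖₊ : ℝ≥0∞) ∂ν :=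
        ofReal_integral_norm_eq_lintegral_enorm hgB
      rw [← hofreal]
      refine ENNReal.ofReal_le_ofReal ?_
      simpa [Real.norm_eq_abs] using hrealbound
    have htGpos : 0 < tG μ γ := tG_pos hγ hpos
    have hQ2 : IntegrableOn g (Iio (tG μ γ)) ν := by
      obtain ⟨u, hum, humem, hulim⟩ := exists_seq_strictMono_tendsto' htGpos
      have huT : ∀ n, (((u n).toNNReal : ℝ≥0) : ℝ≥0∞) = u n := fun n =>
        ENNReal.coe_toNNReal (lt_of_lt_of_le (humem n).2 le_top).ne
      have hcov : Iio (tG μ γ) ⊆ ⋃ n, Iic (u n) := by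
        intro x hx
        obtain ⟨n, hn⟩ := ((tendsto_order.1 hulim).1 x hx).exists
        exact mem_iUnion.2 ⟨n, hn.le⟩
      refine ⟨hgmeas.aestronglyMeasurable.restrict, ?_⟩
      have hmono : Monotone fun n => Iic (u n) := fun a b hab =>
        Iic_subset_Iic.2 (hum.monotone hab)
      set ρ : Measure ℝ≥0∞ := ν.withDensity fun x => (‖g x‖₊ : ℝ≥0∞) with hρ
      have hρ_apply : ∀ s : Set ℝ≥0∞, MeasurableSet s →
          ρ s = ∫⁻ x in s, (‖g x‖₊ : ℝ≥0∞) ∂ν := fun s hs => withDensity_apply _ hs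
      have hbound : ∀ n, ρ (Iic (u n)) ≤ ENNReal.ofReal C := by
        intro n
        rw [hρ_apply _ measurableSet_Iic]
        have h1 : Icc (0 : ℝ≥0∞) (u n) = Iic (u n) := by
          ext x; simp [zero_le]
        have h2 : ((u n).toNNReal : ℝ≥0) ∈ TT μ γ :=
          mem_TT_of_lt_tG hγ (by rw [huT n]; exact (humem n).2)
        have h3 := hclaim _ h2
        rw [huT n, h1] at h3
        exact h3
      show (∫⁻ x in Iio (tG μ γ), (‖g x‖₊ : ℝ≥0∞) ∂ν) < ⊤
      calc ∫⁻ x in Iio (tG μ γ), (‖g x‖₊ : ℝ≥0∞) ∂ν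
          = ρ (Iio (tG μ γ)) := (hρ_apply _ measurableSet_Iio).symm
        _ ≤ ρ (⋃ n, Iic (u n)) := measure_mono hcov
        _ = ⨆ n, ρ (Iic (u n)) := (hmono.directed_le).measure_iUnion
        _ ≤ ENNReal.ofReal C := iSup_le hbound
        _ < ⊤ := ENNReal.ofReal_lt_top
    have hQ1 : Integrable (fun ω => ({ω' | γ ω' < ⊤}.indicator L') ω) μ := by
      have hgind := (hext hQ2).2
      have heq : (fun ω => ({ω' | γ ω' < ⊤}.indicator L') ω) =
          fun ω => W ω - ({ω' | γ ω' < ⊤}.indicator (fun ω' => g (γ ω'))) ω := by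
        funext ω
        by_cases hlt : γ ω < ⊤
        · have hmem : ω ∈ {ω' | γ ω' < ⊤} := hlt
          simp only [hWdef, hgdef, Set.indicator_of_mem hmem, if_pos hlt]
          ring
        · simp [hWdef, hlt, Set.indicator_of_notMem (hlt : ω ∉ {ω' | γ ω' < ⊤})]
      rw [heq]
      exact hWint.sub hgind
    exact ⟨hQ1, hQ2⟩
  · -- both integrability conditions imply existence of an integrable limit
    rintro ⟨hQ1, hQ2⟩
    obtain ⟨hgT, hgind⟩ := hext hQ2
    set cbar := μ {ω | γ ω = ⊤} with hcbar
    set Iinf : ℝ := ∫ x in Ioo (0 : ℝ≥0∞) ⊤, g x ∂ν with hIdef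
    set c : ℝ := (F 0 * Gbar μ γ 0 - Iinf) / cbar.toReal with hcdef
    refine ⟨fun ω => if γ ω < ⊤ then H (γ ω).toNNReal + L' ω else c, ?_, ?_⟩
    · -- a.s. convergence
      by_cases hc : cbar = 0
      · have h0 : ∀ᵐ ω ∂μ, γ ω < ⊤ := by
          rw [ae_iff]
          convert hc using 2
          ext ω; simp [not_lt, top_le_iff]
        filter_upwards [hrepr, h0] with ω hω hlt
        rw [if_pos hlt]
        exact hconst ω hω hlt
      · -- `t_G = ∞` and `F` converges at infinity
        have hlttop : μ {ω | γ ω < ⊤} < 1 := by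
          have h1 : {ω | γ ω < ⊤} = {ω | γ ω = ⊤}ᶜ := by
            ext ω; simp [lt_top_iff_ne_top]
          rw [h1, prob_compl_eq_one_sub (s := {ω | γ ω = ⊤}) (hγ (measurableSet_singleton ⊤))]
          exact ENNReal.sub_lt_self ENNReal.one_ne_top one_ne_zero hc
        have htG : tG μ γ = ⊤ := by
          refine sSup_eq_top.2 fun b hb => ?_
          refine ⟨((b.toNNReal + 1 : ℝ≥0) : ℝ≥0∞), ⟨b.toNNReal + 1, ?_, rfl⟩, ?_⟩
          · refine lt_of_le_of_lt (measure_mono fun ω hω => ?_) hlttop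
            exact lt_of_le_of_lt hω ENNReal.coe_lt_top
          · calc b = (b.toNNReal : ℝ≥0∞) := (ENNReal.coe_toNNReal hb.ne).symm
              _ < ((b.toNNReal + 1 : ℝ≥0) : ℝ≥0∞) := by
                exact_mod_cast lt_add_one _
        have hF : Tendsto F atTop (𝓝 c) := by
          have hGanti : Antitone (Gbar μ γ) := by
            intro s t hst
            exact ENNReal.toReal_mono (measure_ne_top _ _)
              (measure_mono fun ω hω =>
                lt_of_le_of_lt (ENNReal.coe_le_coe.2 hst) hω)
          have hGlb : ∀ t : ℝ≥0, cbar.toReal ≤ Gbar μ γ t := by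
            intro t
            refine ENNReal.toReal_mono (measure_ne_top _ _)
              (measure_mono fun ω hω => ?_)
            have hω' : γ ω = ⊤ := hω
            rw [mem_setOf_eq, hω']
            exact ENNReal.coe_lt_top
          have hcbar_pos : 0 < cbar.toReal := ENNReal.toReal_pos hc (measure_ne_top _ _)
          have hGnat : Tendsto (fun n : ℕ => Gbar μ γ (n : ℝ≥0)) atTop (𝓝 cbar.toReal) := by
            have hmeas : ∀ n : ℕ, NullMeasurableSet {ω | (((n : ℝ≥0)) : ℝ≥0∞) < γ ω} μ :=
              fun n => (hγ measurableSet_Ioi).nullMeasurableSet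
            have hanti : Antitone fun n : ℕ => {ω | (((n : ℝ≥0)) : ℝ≥0∞) < γ ω} := by
              intro a b hab ω hω
              have hω' : (((b : ℝ≥0)) : ℝ≥0∞) < γ ω := hω
              have hle : (((a : ℝ≥0)) : ℝ≥0∞) ≤ (((b : ℝ≥0)) : ℝ≥0∞) := by
                exact_mod_cast hab
              exact lt_of_le_of_lt hle hω'
            have h1 : Tendsto (fun n : ℕ => μ {ω | (((n : ℝ≥0)) : ℝ≥0∞) < γ ω}) atTop
                (𝓝 (μ (⋂ n : ℕ, {ω | (((n : ℝ≥0)) : ℝ≥0∞) < γ ω}))) :=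
              tendsto_measure_iInter_atTop (μ := μ)
                (s := fun n : ℕ => {ω | (((n : ℝ≥0)) : ℝ≥0∞) < γ ω}) hmeas hanti
                ⟨0, measure_ne_top μ _⟩
            have h2 : (⋂ n : ℕ, {ω | (((n : ℝ≥0)) : ℝ≥0∞) < γ ω}) = {ω | γ ω = ⊤} := by
              ext ω
              simp only [mem_iInter, mem_setOf_eq]
              constructor
              · intro h
                by_contra hne
                obtain ⟨n, hn⟩ := ENNReal.exists_nat_gt hne
                refine absurd (h n) (not_lt.2 (le_of_lt ?_))
                exact_mod_cast hn
              · intro h n; rw [h]; exact ENNReal.coe_lt_top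
            rw [h2] at h1
            exact (ENNReal.tendsto_toReal (measure_ne_top μ _)).comp h1
          have hGtend : Tendsto (Gbar μ γ) atTop (𝓝 cbar.toReal) := by
            refine tendsto_order.2 ⟨fun a ha =>
              Eventually.of_forall fun t => lt_of_lt_of_le ha (hGlb t), fun a ha => ?_⟩
            obtain ⟨N, hN⟩ := (hGnat.eventually (gt_mem_nhds ha)).exists
            exact eventually_atTop.2
              ⟨(N : ℝ≥0), fun t hNt => lt_of_le_of_lt (hGanti hNt) hN⟩
          have hIoo : IntegrableOn g (Ioo 0 ⊤) ν :=
            hgT.mono_set fun x hx => hx.2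
          have hUnion : (⋃ t : ℝ≥0, Ioc (0 : ℝ≥0∞) (t : ℝ≥0∞)) = Ioo 0 ⊤ := by
            ext x
            simp only [mem_iUnion, mem_Ioc, mem_Ioo]
            constructor
            · rintro ⟨t, h1, h2⟩
              exact ⟨h1, lt_of_le_of_lt h2 ENNReal.coe_lt_top⟩
            · rintro ⟨h1, h2⟩
              exact ⟨x.toNNReal, h1, (ENNReal.coe_toNNReal h2.ne).ge⟩
          have hItend : Tendsto (fun t : ℝ≥0 =>
              ∫ x in Ioc (0 : ℝ≥0∞) (t : ℝ≥0∞), g x ∂ν) atTop (𝓝 Iinf) := by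
            have h := tendsto_setIntegral_of_monotone
              (fun t : ℝ≥0 => measurableSet_Ioc)
              (fun a b hab => Ioc_subset_Ioc le_rfl (ENNReal.coe_le_coe.2 hab))
              (hUnion ▸ hIoo)
            rw [hUnion] at h
            exact h
          have hFeq : ∀ t : ℝ≥0, F t =
              (F 0 * Gbar μ γ 0 - ∫ x in Ioc (0 : ℝ≥0∞) (t : ℝ≥0∞), g x ∂ν) /
                Gbar μ γ t := by
            intro t
            have h := hcond t (htG ▸ ENNReal.coe_lt_top)
            have hGt : Gbar μ γ t ≠ 0 := (lt_of_lt_of_le hcbar_pos (hGlb t)).ne'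
            rw [eq_div_iff hGt]
            linarith [h]
          have hdiv := ((tendsto_const_nhds (x := F 0 * Gbar μ γ 0)).sub hItend).div hGtend hcbar_pos.ne'
          exact hdiv.congr fun t => (hFeq t).symm
        filter_upwards [hrepr] with ω hω
        by_cases hlt : γ ω < ⊤
        · rw [if_pos hlt]
          exact hconst ω hω hlt
        · rw [if_neg hlt]
          have hωT : γ ω = ⊤ := top_le_iff.1 (not_lt.1 hlt)
          refine hF.congr fun t => ?_
          rw [hω t, if_pos (hωT ▸ ENNReal.coe_lt_top)]
    · -- integrability of the limit
      have heq : (fun ω => if γ ω < ⊤ then H (γ ω).toNNReal + L' ω else c) =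
          fun ω => (({ω' | γ ω' < ⊤}.indicator (fun ω' => g (γ ω'))) ω +
            ({ω' | γ ω' < ⊤}.indicator L') ω) +
            ({ω' | γ ω' < ⊤}ᶜ.indicator (fun _ => c)) ω := by
        funext ω
        by_cases hlt : γ ω < ⊤ <;>
          simp [Set.indicator_apply, hlt, hgdef]
      rw [heq]
      exact (hgind.add hQ1).add ((integrable_const c).indicator hsetlt.compl)

end WithMeasurableSpace

end SingleJump
end
end
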